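/- arXiv:1402.1710 — 7 statements merged into one kernel-verified Lean document; each statement's English description precedes it below -/
import Mathlib

section
/- Let a, b be real numbers with a > -1, b > -1 and a + b < -1, and let u, v be real numbers with u ≠ v. Then ∫_{-∞}^{min(u,v)} (u-s)^a (v-s)^b ds = β̃_{a,b}(u,v) · |u-v|^{a+b+1}, where β̃_{a,b}(u,v) = B(a+1, -1-a-b) if u < v and β̃_{a,b}(u,v) = B(b+1, -1-a-b) if v < u, B denoting the Beta function B(x,y) = ∫_0^1 t^{x-1}(1-t)^{y-1} dt. -/
open MeasureTheory

/-- The Beta function `B(x,y) = ∫_0^1 t^{x-1} (1-t)^{y-1} dt`. -/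
noncomputable def betaFn (x y : ℝ) : ℝ :=
  ∫ t in Set.Ioo (0:ℝ) 1, t ^ (x - 1) * (1 - t) ^ (y - 1)

lemma key_aux (a b u v : ℝ) (huv : u < v) :
    (∫ s in Set.Iio u, (u - s) ^ a * (v - s) ^ b) =
      betaFn (a + 1) (-1 - a - b) * (v - u) ^ (a + b + 1) := by
  set c := v - u with hc
  have hc0 : 0 < c := by simp [hc]; linarith
  set f : ℝ → ℝ := fun t => u - c * (t / (1 - t)) with hf
  set f' : ℝ → ℝ := fun t => -c / (1 - t) ^ 2 with hf'
  have himg : f '' Set.Ioo 0 1 = Set.Iio u := by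
    ext y
    constructor
    · rintro ⟨t, ⟨ht0, ht1⟩, rfl⟩
      have h1t : 0 < 1 - t := by linarith
      have : 0 < c * (t / (1 - t)) := by positivity
      simp only [hf, Set.mem_Iio]
      linarith
    · intro hy
      simp only [Set.mem_Iio] at hy
      set w := u - y with hw
      have hw0 : 0 < w := by simp [hw]; linarith
      refine ⟨w / (c + w), ⟨by positivity, ?_⟩, ?_⟩
      · rw [div_lt_one (by positivity)]; linarith
      · have hcw : c + w ≠ 0 := by positivity
        have h1 : 1 - w / (c + w) = c / (c + w) := by field_simp; ring
        simp only [hf, h1]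
        have hcne : c ≠ 0 := hc0.ne'
        rw [show c * (w / (c + w) / (c / (c + w))) = w by field_simp]
        simp [hw]
  have hinj : Set.InjOn f (Set.Ioo 0 1) := by
    rintro t1 ⟨h10, h11⟩ t2 ⟨h20, h21⟩ h
    simp only [hf] at h
    have e1 : (1:ℝ) - t1 ≠ 0 := by linarith
    have e2 : (1:ℝ) - t2 ≠ 0 := by linarith
    have h2 : c * (t1 / (1 - t1)) = c * (t2 / (1 - t2)) := by linarith
    have h3 : t1 / (1 - t1) = t2 / (1 - t2) := mul_left_cancel₀ hc0.ne' h2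
    field_simp at h3
    nlinarith
  have hderiv : ∀ t ∈ Set.Ioo (0:ℝ) 1, HasDerivWithinAt f (f' t) (Set.Ioo 0 1) t := by
    rintro t ⟨ht0, ht1⟩
    have h1t : (1:ℝ) - t ≠ 0 := by intro h; linarith
    have hd : HasDerivAt (fun t : ℝ => t / (1 - t))
        ((1 * (1 - t) - t * (0 - 1)) / (1 - t) ^ 2) t := by
      exact (hasDerivAt_id t).div ((hasDerivAt_const t 1).sub (hasDerivAt_id t)) h1t
    have hd2 : HasDerivAt f (-(c * ((1 * (1 - t) - t * (0 - 1)) / (1 - t) ^ 2))) t :=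
      (hd.const_mul c).const_sub u
    have : -(c * ((1 * (1 - t) - t * (0 - 1)) / (1 - t) ^ 2)) = f' t := by
      simp only [hf']
      field_simp
      ring
    exact (this ▸ hd2).hasDerivWithinAt
  calc (∫ s in Set.Iio u, (u - s) ^ a * (v - s) ^ b)
      = ∫ s in f '' Set.Ioo 0 1, (u - s) ^ a * (v - s) ^ b := by rw [himg]
    _ = ∫ t in Set.Ioo (0:ℝ) 1, |f' t| • ((u - f t) ^ a * (v - f t) ^ b) :=
        integral_image_eq_integral_abs_deriv_smul measurableSet_Ioo hderiv hinj _
    _ = ∫ t in Set.Ioo (0:ℝ) 1, (v - u) ^ (a + b + 1) * (t ^ (a + 1 - 1) * (1 - t) ^ (-1 - a - b - 1)) := by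
        refine setIntegral_congr_fun measurableSet_Ioo fun t ⟨ht0, ht1⟩ => ?_
        have h1t : (0:ℝ) < 1 - t := by linarith
        have h1 : u - f t = c * t / (1 - t) := by simp [hf]; ring
        have h2 : v - f t = c / (1 - t) := by
          simp only [hf]
          field_simp
          ring
        rw [h1, h2]
        have habs : |f' t| = c / (1 - t) ^ 2 := by
          simp only [hf']
          rw [abs_div, abs_neg, abs_of_pos hc0, abs_of_pos (by positivity)]
        rw [habs, smul_eq_mul, mul_div_assoc c t, Real.mul_rpow hc0.le (by positivity),
          Real.div_rpow ht0.le h1t.le, Real.div_rpow hc0.le h1t.le]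
        have hrw1 : (v - u) ^ (a + b + 1) = c ^ a * c ^ b * c := by
          rw [← hc, Real.rpow_add hc0, Real.rpow_add hc0, Real.rpow_one]
        have hrw2 : (1 - t) ^ (-1 - a - b - 1) = ((1 - t) ^ (2:ℕ) * (1 - t) ^ a * (1 - t) ^ b)⁻¹ := by
          rw [show (-1 - a - b - 1 : ℝ) = -(((2:ℕ):ℝ) + a + b) by push_cast; ring,
            Real.rpow_neg h1t.le, Real.rpow_add h1t, Real.rpow_add h1t, Real.rpow_natCast]
        have hrw3 : a + 1 - 1 = a := by ring
        rw [hrw1, hrw2, hrw3]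
        have e1 : ((1:ℝ) - t) ^ (2:ℕ) ≠ 0 := by positivity
        have e2 : (1 - t) ^ (a:ℝ) ≠ 0 := by positivity
        have e3 : (1 - t) ^ (b:ℝ) ≠ 0 := by positivity
        field_simp
    _ = (v - u) ^ (a + b + 1) * ∫ t in Set.Ioo (0:ℝ) 1, t ^ (a + 1 - 1) * (1 - t) ^ (-1 - a - b - 1) :=
        integral_const_mul _ _
    _ = betaFn (a + 1) (-1 - a - b) * (v - u) ^ (a + b + 1) := by
        rw [betaFn, mul_comm]

theorem stmt_0 (a b u v : ℝ) (ha : -1 < a) (hb : -1 < b) (hab : a + b < -1)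
    (huv : u ≠ v) :
    (∫ s in Set.Iio (min u v), (u - s) ^ a * (v - s) ^ b) =
      (if u < v then betaFn (a + 1) (-1 - a - b) else betaFn (b + 1) (-1 - a - b)) *
        |u - v| ^ (a + b + 1) := by
  rcases lt_or_gt_of_ne huv with h | h
  · rw [if_pos h, min_eq_left h.le, abs_of_neg (by linarith), neg_sub]
    exact key_aux a b u v h
  · rw [if_neg (not_lt.mpr h.le), min_eq_right h.le, abs_of_pos (by linarith)]
    have h1 : (∫ s in Set.Iio v, (u - s) ^ a * (v - s) ^ b)
        = ∫ s in Set.Iio v, (v - s) ^ b * (u - s) ^ a := by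
      simp_rw [mul_comm]
    have h2 := key_aux b a v u h
    rw [show (-1 - b - a : ℝ) = -1 - a - b by ring, show (b + a + 1 : ℝ) = a + b + 1 by ring] at h2
    rw [h1, h2]
end

section
/- Let a, b be real numbers with a > -1, b > -1 and a + b < -1, and let u, v be real numbers with u ≠ v. Then ∫_{-∞}^{min(u,v)} (u-s)^a (v-s)^b ds ≤ C(a,b) · |u-v|^{a+b+1}, where C(a,b) = max(B(a+1, -1-a-b), B(b+1, -1-a-b)) < ∞ and B denotes the Beta function. -/
open MeasureTheory

open Set in
lemma key_change (a b u v : ℝ) (huv : u < v) :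
    (∫ s in Set.Iio u, (u - s) ^ a * (v - s) ^ b) =
      (v - u) ^ (a + b + 1) * betaFn (a + 1) (-1 - a - b) := by
  have hc : (0:ℝ) < v - u := sub_pos.2 huv
  set g : ℝ → ℝ := fun s => (u - s) / (v - s) with hg
  have himg : g '' Iio u = Ioo 0 1 := by
    ext t
    constructor
    · rintro ⟨s, hs, rfl⟩
      have hx : 0 < u - s := sub_pos.2 hs
      have hy : 0 < v - s := sub_pos.2 (hs.trans huv)
      exact ⟨div_pos hx hy, (div_lt_one hy).2 (by linarith)⟩
    · rintro ⟨ht0, ht1⟩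
      have h1t : (0:ℝ) < 1 - t := by linarith
      refine ⟨(u - v * t) / (1 - t), ?_, ?_⟩
      · rw [mem_Iio, div_lt_iff₀ h1t]
        nlinarith
      · have e1 : u - (u - v * t) / (1 - t) = (v - u) * t / (1 - t) := by
          field_simp; ring
        have e2 : v - (u - v * t) / (1 - t) = (v - u) / (1 - t) := by
          field_simp; ring
        simp only [hg, e1, e2]
        field_simp
  have hderiv : ∀ s ∈ Iio u, HasDerivWithinAt g (-(v - u) / (v - s) ^ 2) (Iio u) s := by
    intro s hs
    have hy : v - s ≠ 0 := ne_of_gt (sub_pos.2 (hs.trans huv))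
    have h1 : HasDerivAt (fun x => u - x) (-1 : ℝ) s := by
      simpa using (hasDerivAt_id s).const_sub u
    have h2 : HasDerivAt (fun x => v - x) (-1 : ℝ) s := by
      simpa using (hasDerivAt_id s).const_sub v
    have := (h1.div h2 hy)
    exact this.hasDerivWithinAt.congr_deriv (by ring)
  have hinj : InjOn g (Iio u) := by
    intro s1 h1 s2 h2 h
    have hy1 : v - s1 ≠ 0 := ne_of_gt (sub_pos.2 (h1.trans huv))
    have hy2 : v - s2 ≠ 0 := ne_of_gt (sub_pos.2 (h2.trans huv))
    simp only [hg] at h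
    rw [div_eq_div_iff hy1 hy2] at h
    have h3 : (s1 - s2) * (u - v) = 0 := by linear_combination h
    rcases mul_eq_zero.1 h3 with h4 | h4
    · linarith
    · exact absurd h4 (by linarith)
  have hbeta : betaFn (a + 1) (-1 - a - b) =
      (v - u) ^ (-(a + b + 1)) * ∫ s in Iio u, (u - s) ^ a * (v - s) ^ b := by
    have himage := integral_image_eq_integral_abs_deriv_smul measurableSet_Iio hderiv hinj
      (fun t => t ^ (a + 1 - 1) * (1 - t) ^ (-1 - a - b - 1))
    rw [himg] at himage
    rw [betaFn, himage, ← integral_const_mul]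
    apply setIntegral_congr_fun measurableSet_Iio
    intro s hs
    have hx : 0 < u - s := sub_pos.2 hs
    have hy : 0 < v - s := sub_pos.2 (hs.trans huv)
    have e2 : (1:ℝ) - g s = (v - u) / (v - s) := by
      simp only [hg]
      field_simp; ring
    have e1 : g s = (u - s) / (v - s) := rfl
    simp only [smul_eq_mul]
    rw [e1, e2, abs_div, abs_neg, abs_of_pos hc,
      abs_of_pos (pow_pos hy 2)]
    have hL : 0 < (v - u) / (v - s) ^ 2 *
        (((u - s) / (v - s)) ^ (a + 1 - 1) * ((v - u) / (v - s)) ^ (-1 - a - b - 1)) := by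
      positivity
    have hR : 0 < (v - u) ^ (-(a + b + 1)) * ((u - s) ^ a * (v - s) ^ b) := by
      positivity
    apply Real.log_injOn_pos (mem_Ioi.2 hL) (mem_Ioi.2 hR)
    rw [Real.log_mul (ne_of_gt (by positivity)) (ne_of_gt (by positivity)),
      Real.log_mul (ne_of_gt (by positivity)) (ne_of_gt (by positivity)),
      Real.log_mul (ne_of_gt (by positivity)) (ne_of_gt (by positivity)),
      Real.log_rpow (by positivity), Real.log_rpow (by positivity),
      Real.log_rpow hc,
      Real.log_mul (Real.rpow_pos_of_pos hx a).ne' (Real.rpow_pos_of_pos hy b).ne',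
      Real.log_rpow hx, Real.log_rpow hy,
      Real.log_div (ne_of_gt hc) (ne_of_gt (by positivity)),
      Real.log_div (ne_of_gt hx) (ne_of_gt hy),
      Real.log_div (ne_of_gt hc) (ne_of_gt hy),
      Real.log_pow]
    ring
  rw [hbeta, ← mul_assoc, ← Real.rpow_add hc, add_neg_cancel, Real.rpow_zero, one_mul]

theorem stmt_1 (a b u v : ℝ) (ha : -1 < a) (hb : -1 < b) (hab : a + b < -1)
    (huv : u ≠ v) :
    (∫ s in Set.Iio (min u v), (u - s) ^ a * (v - s) ^ b) ≤
      max (betaFn (a + 1) (-1 - a - b)) (betaFn (b + 1) (-1 - a - b)) *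
        |u - v| ^ (a + b + 1) := by
  rcases huv.lt_or_gt with h | h
  · rw [min_eq_left h.le, key_change a b u v h, abs_sub_comm,
      abs_of_pos (sub_pos.2 h), mul_comm ((v - u) ^ (a + b + 1))]
    exact mul_le_mul_of_nonneg_right (le_max_left _ _) (Real.rpow_nonneg (sub_pos.2 h).le _)
  · rw [min_eq_right h.le, abs_of_pos (sub_pos.2 h)]
    have hcomm : (fun s => (u - s) ^ a * (v - s) ^ b) =
        fun s => (v - s) ^ b * (u - s) ^ a := by
      funext s; ring
    rw [hcomm, key_change b a v u h, show b + a + 1 = a + b + 1 by ring,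
      show (-1 - b - a) = (-1 - a - b) by ring, mul_comm ((u - v) ^ (a + b + 1))]
    exact mul_le_mul_of_nonneg_right (le_max_right _ _) (Real.rpow_nonneg (sub_pos.2 h).le _)
end

section
/- Let a be a real number with -1 < a < -1/2, and let u, v be real numbers with u ≠ v. Then ∫_ℝ (u-x)_+^a (v-x)_+^a dx = B(a+1, -2a-1) · |u-v|^{2a+1}, where B denotes the Beta function and (t)_+^a denotes t^a when t > 0 and 0 otherwise. -/
set_option maxRecDepth 4000

open MeasureTheory

/-- `(t)_+^a`, equal to `t^a` when `t > 0` and to `0` otherwise. -/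
noncomputable def posPow (t a : ℝ) : ℝ := if 0 < t then t ^ a else 0

lemma posPow_mul {d : ℝ} (hd : 0 < d) (x a : ℝ) :
    posPow (d * x) a = d ^ a * posPow x a := by
  unfold posPow
  by_cases hx : 0 < x
  · simp [hx, mul_pos hd hx, Real.mul_rpow hd.le hx.le]
  · have h2 : ¬ 0 < d * x := by
      push_neg at hx ⊢
      exact mul_nonpos_of_nonneg_of_nonpos hd.le hx
    simp [hx, h2]

lemma key_integral (a : ℝ) :
    (∫ x : ℝ, posPow x a * posPow (1 + x) a) = betaFn (a + 1) (-2 * a - 1) := by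
  have hfun : (fun x : ℝ => posPow x a * posPow (1 + x) a)
      = Set.indicator (Set.Ioi (0:ℝ)) (fun x => x ^ a * (1 + x) ^ a) := by
    funext x
    by_cases hx : 0 < x
    · have h1 : (0:ℝ) < 1 + x := by linarith
      simp [posPow, hx, h1, Set.indicator_of_mem (Set.mem_Ioi.mpr hx)]
    · simp [posPow, hx, Set.indicator_apply, Set.mem_Ioi]
  rw [hfun, integral_indicator measurableSet_Ioi]
  -- substitution t ↦ t / (1 - t) from Ioo 0 1 to Ioi 0
  set f : ℝ → ℝ := fun t => t / (1 - t) with hf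
  have himg : f '' Set.Ioo (0:ℝ) 1 = Set.Ioi (0:ℝ) := by
    ext x
    constructor
    · rintro ⟨t, ⟨ht0, ht1⟩, rfl⟩
      exact Set.mem_Ioi.mpr (div_pos ht0 (by linarith))
    · intro hx
      have hx' : (0:ℝ) < x := hx
      refine ⟨x / (1 + x), ⟨div_pos hx' (by linarith), ?_⟩, ?_⟩
      · rw [div_lt_one (by linarith)]; linarith
      · simp only [hf]
        have h1x : (0:ℝ) < 1 + x := by linarith
        rw [show 1 - x / (1 + x) = (1 + x)⁻¹ by field_simp; ring]
        field_simp
  have hderiv : ∀ t ∈ Set.Ioo (0:ℝ) 1,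
      HasDerivWithinAt f (1 / (1 - t) ^ 2) (Set.Ioo 0 1) t := by
    intro t ⟨ht0, ht1⟩
    have h1t : (1 : ℝ) - t ≠ 0 := by intro h; nlinarith [h]
    have H := (hasDerivAt_id t).div ((hasDerivAt_const t 1).sub (hasDerivAt_id t)) h1t
    simp only [id_eq] at H
    have heq : (1 * (1 - t) - t * (0 - 1)) / (1 - t) ^ 2 = 1 / (1 - t) ^ 2 := by ring
    rw [show (((fun x : ℝ => (1:ℝ)) - id : ℝ → ℝ) t) = 1 - t from rfl, heq] at H
    exact H.hasDerivWithinAt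
  have hinj : Set.InjOn f (Set.Ioo (0:ℝ) 1) := by
    intro s ⟨hs0, hs1⟩ t ⟨ht0, ht1⟩ hst
    simp only [hf] at hst
    rw [div_eq_div_iff (by linarith) (by linarith)] at hst
    nlinarith
  rw [← himg, integral_image_eq_integral_abs_deriv_smul measurableSet_Ioo hderiv hinj]
  unfold betaFn
  refine setIntegral_congr_fun measurableSet_Ioo ?_
  intro t ⟨ht0, ht1⟩
  have h1t : (0:ℝ) < 1 - t := by linarith
  have hft : f t = t * (1 - t)⁻¹ := by simp [hf, div_eq_mul_inv]
  have h1ft : 1 + t * (1 - t)⁻¹ = (1 - t)⁻¹ := by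
    field_simp
    ring
  simp only [smul_eq_mul]
  rw [hft, h1ft, Real.mul_rpow ht0.le (by positivity), Real.inv_rpow h1t.le,
    ← Real.rpow_neg h1t.le, abs_of_pos (by positivity),
    show a + 1 - 1 = a by ring, show -2 * a - 1 - 1 = -a + (-a + -(2:ℝ)) by ring,
    Real.rpow_add h1t, Real.rpow_add h1t]
  have h2 : (1 - t) ^ (-(2:ℝ)) = 1 / (1 - t) ^ 2 := by
    have hc : ((2:ℕ):ℝ) = 2 := by norm_num
    rw [Real.rpow_neg h1t.le, ← hc, Real.rpow_natCast, one_div]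
  rw [h2]
  ring

theorem stmt_2 (a u v : ℝ) (ha : -1 < a) (ha' : a < -1/2) (huv : u ≠ v) :
    (∫ x : ℝ, posPow (u - x) a * posPow (v - x) a) =
      betaFn (a + 1) (-2 * a - 1) * |u - v| ^ (2 * a + 1) := by
  have main : ∀ u v : ℝ, u < v →
      (∫ x : ℝ, posPow (u - x) a * posPow (v - x) a) =
        betaFn (a + 1) (-2 * a - 1) * |u - v| ^ (2 * a + 1) := by
    intro u v huv'
    have hd0 : (0:ℝ) < v - u := by linarith
    set d := v - u with hd
    set F : ℝ → ℝ := fun y => posPow (u - y) a * posPow (v - y) a with hF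
    have h1 : (∫ x : ℝ, F (u - d * x)) = |d⁻¹| • ∫ x : ℝ, F x :=
      calc (∫ x : ℝ, F (u - d * x)) = |d⁻¹| • ∫ y : ℝ, F (u - y) :=
            MeasureTheory.Measure.integral_comp_mul_left (fun y : ℝ => F (u - y)) d
        _ = |d⁻¹| • ∫ x : ℝ, F x := by
            rw [MeasureTheory.integral_sub_left_eq_self F _ u]
    have h2 : ∀ x : ℝ, F (u - d * x) = d ^ a * d ^ a * (posPow x a * posPow (1 + x) a) := by
      intro x
      have e1 : u - (u - d * x) = d * x := by ring
      have e2 : v - (u - d * x) = d * (1 + x) := by rw [hd]; ring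
      simp only [hF, e1, e2, posPow_mul hd0]
      ring
    simp only [h2] at h1
    rw [integral_const_mul, key_integral a] at h1
    have h3 : (∫ x : ℝ, F x) = d * (d ^ a * d ^ a * betaFn (a + 1) (-2 * a - 1)) := by
      rw [smul_eq_mul, abs_of_pos (inv_pos.mpr hd0)] at h1
      rw [h1, ← mul_assoc, mul_inv_cancel₀ hd0.ne', one_mul]
    have habs : |u - v| = d := by
      rw [abs_sub_comm, abs_of_pos hd0]
    rw [h3, habs, show 2 * a + 1 = a + (a + 1) by ring, Real.rpow_add hd0,
      Real.rpow_add hd0, Real.rpow_one]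
    ring
  rcases lt_or_gt_of_ne huv with h | h
  · exact main u v h
  · have hcomm : (∫ x : ℝ, posPow (u - x) a * posPow (v - x) a)
        = ∫ x : ℝ, posPow (v - x) a * posPow (u - x) a := by
      congr 1
      funext x
      ring
    rw [hcomm, main v u h, abs_sub_comm]
end

section
/- Let α1, α2 ∈ [0,1) with α1 + α2 ≥ 1, and let F : [0,1]² → (0,∞) be measurable with γ := ∫_{[0,1]²} F(U,V) dU dV < ∞. Assume Δ(ℓ) := ∫_{[0,1]^4} |U-U'+ℓ|^{-α1} |V-V'+ℓ|^{-α2} F(U,V) F(U',V') dU dV dU' dV' is finite for every integer ℓ. Then there exists a constant C > 0 such that for all N ≥ 2, ∑_{i=0}^{N-1} ∑_{j=0}^{N-1} Δ(i-j) ≤ C · N · (log N)^{ε}, where ε = 1 if α1 + α2 = 1 and ε = 0 if α1 + α2 > 1. -/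
open MeasureTheory Finset

set_option maxHeartbeats 1000000 in
theorem stmt_3 (α₁ α₂ : ℝ) (hα₁ : 0 ≤ α₁) (hα₁' : α₁ < 1) (hα₂ : 0 ≤ α₂) (hα₂' : α₂ < 1)
    (hsum : 1 ≤ α₁ + α₂)
    (F : ℝ → ℝ → ℝ) (hFmeas : Measurable (Function.uncurry F))
    (hFpos : ∀ U V : ℝ, U ∈ Set.Icc (0:ℝ) 1 → V ∈ Set.Icc (0:ℝ) 1 → 0 < F U V)
    -- `γ < ∞` : `F` is integrable on the unit square
    (hγfin : IntegrableOn (fun p : ℝ × ℝ => F p.1 p.2)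
      (Set.Icc (0:ℝ) 1 ×ˢ Set.Icc (0:ℝ) 1))
    (Δ : ℤ → ℝ)
    -- `Δ(ℓ) < ∞` : the integrand defining `Δ(ℓ)` is integrable on `[0,1]^4`
    (hΔfin : ∀ ℓ : ℤ, IntegrableOn
      (fun p : (ℝ × ℝ) × (ℝ × ℝ) =>
        |p.1.1 - p.2.1 + (ℓ:ℝ)| ^ (-α₁) * |p.1.2 - p.2.2 + (ℓ:ℝ)| ^ (-α₂) *
          F p.1.1 p.1.2 * F p.2.1 p.2.2)
      ((Set.Icc (0:ℝ) 1 ×ˢ Set.Icc (0:ℝ) 1) ×ˢ (Set.Icc (0:ℝ) 1 ×ˢ Set.Icc (0:ℝ) 1)))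
    (hΔ : ∀ ℓ : ℤ, Δ ℓ =
      ∫ p in (Set.Icc (0:ℝ) 1 ×ˢ Set.Icc (0:ℝ) 1) ×ˢ (Set.Icc (0:ℝ) 1 ×ˢ Set.Icc (0:ℝ) 1),
        |p.1.1 - p.2.1 + (ℓ:ℝ)| ^ (-α₁) * |p.1.2 - p.2.2 + (ℓ:ℝ)| ^ (-α₂) *
          F p.1.1 p.1.2 * F p.2.1 p.2.2) :
    ∃ C : ℝ, 0 < C ∧ ∀ N : ℕ, 2 ≤ N →
      ∑ i ∈ range N, ∑ j ∈ range N, Δ ((i:ℤ) - (j:ℤ)) ≤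
        C * N * Real.log N ^ (if α₁ + α₂ = 1 then (1:ℕ) else 0) := by
  classical
  set S2 : Set (ℝ × ℝ) := Set.Icc (0:ℝ) 1 ×ˢ Set.Icc (0:ℝ) 1 with hS2def
  have hS2meas : MeasurableSet S2 := measurableSet_Icc.prod measurableSet_Icc
  have hS4meas : MeasurableSet (S2 ×ˢ S2) := hS2meas.prod hS2meas
  set γ : ℝ := ∫ p in S2, F p.1 p.2 with hγdef
  have hγ0 : 0 ≤ γ :=
    setIntegral_nonneg hS2meas fun p hp => (hFpos p.1 p.2 hp.1 hp.2).le
  have hvol : (volume : Measure ((ℝ × ℝ) × ℝ × ℝ)) = (volume : Measure (ℝ × ℝ)).prod volume :=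
    Measure.volume_eq_prod _ _
  -- Δ is nonnegative
  have hΔ0 : ∀ ℓ : ℤ, 0 ≤ Δ ℓ := by
    intro ℓ
    rw [hΔ ℓ]
    refine setIntegral_nonneg hS4meas ?_
    rintro ⟨⟨U, V⟩, U', V'⟩ ⟨⟨hU, hV⟩, hU', hV'⟩
    have h1 : (0:ℝ) ≤ |U - U' + (ℓ:ℝ)| ^ (-α₁) := Real.rpow_nonneg (abs_nonneg _) _
    have h2 : (0:ℝ) ≤ |V - V' + (ℓ:ℝ)| ^ (-α₂) := Real.rpow_nonneg (abs_nonneg _) _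
    exact mul_nonneg (mul_nonneg (mul_nonneg h1 h2) (hFpos U V hU hV).le)
      (hFpos U' V' hU' hV').le
  -- product of F is integrable on the 4-dim cube
  have hFF : IntegrableOn (fun p : (ℝ × ℝ) × ℝ × ℝ => F p.1.1 p.1.2 * F p.2.1 p.2.2)
      (S2 ×ˢ S2) := by
    have h := hγfin.mul_prod hγfin
    rw [Measure.prod_restrict] at h
    show Integrable _ ((volume : Measure ((ℝ × ℝ) × ℝ × ℝ)).restrict (S2 ×ˢ S2))
    rw [hvol]
    exact h
  have hprod : ∫ p in S2 ×ˢ S2, F p.1.1 p.1.2 * F p.2.1 p.2.2 = γ * γ := by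
    rw [hvol]
    exact setIntegral_prod_mul (fun q : ℝ × ℝ => F q.1 q.2) (fun q : ℝ × ℝ => F q.1 q.2) S2 S2
  -- key decay bound
  have key : ∀ ℓ : ℤ, 2 ≤ ℓ.natAbs → Δ ℓ ≤ (|(ℓ:ℝ)| - 1) ^ (-(α₁ + α₂)) * (γ * γ) := by
    intro ℓ hℓ
    have habs : (2:ℝ) ≤ |(ℓ:ℝ)| := by
      rw [← Int.cast_abs, Int.abs_eq_natAbs]
      exact_mod_cast hℓ
    have hc : (0:ℝ) < |(ℓ:ℝ)| - 1 := by linarith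
    rw [hΔ ℓ]
    have hmono : ∫ p in S2 ×ˢ S2,
        |p.1.1 - p.2.1 + (ℓ:ℝ)| ^ (-α₁) * |p.1.2 - p.2.2 + (ℓ:ℝ)| ^ (-α₂) *
          F p.1.1 p.1.2 * F p.2.1 p.2.2
        ≤ ∫ p in S2 ×ˢ S2,
          (|(ℓ:ℝ)| - 1) ^ (-(α₁ + α₂)) * (F p.1.1 p.1.2 * F p.2.1 p.2.2) := by
      refine setIntegral_mono_on (hΔfin ℓ) (hFF.const_mul _) hS4meas ?_
      rintro ⟨⟨U, V⟩, U', V'⟩ ⟨⟨hU, hV⟩, hU', hV'⟩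
      simp only
      have hUU : |U' - U| ≤ 1 := by
        rw [abs_sub_le_iff]; constructor <;> [skip; skip] <;>
          linarith [hU.1, hU.2, hU'.1, hU'.2]
      have hVV : |V' - V| ≤ 1 := by
        rw [abs_sub_le_iff]; constructor <;> [skip; skip] <;>
          linarith [hV.1, hV.2, hV'.1, hV'.2]
      have hb1 : |(ℓ:ℝ)| - 1 ≤ |U - U' + (ℓ:ℝ)| := by
        have h := abs_sub_abs_le_abs_sub ((ℓ:ℝ)) (U' - U)
        have he : (ℓ:ℝ) - (U' - U) = U - U' + ℓ := by ring
        rw [he] at h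
        linarith
      have hb2 : |(ℓ:ℝ)| - 1 ≤ |V - V' + (ℓ:ℝ)| := by
        have h := abs_sub_abs_le_abs_sub ((ℓ:ℝ)) (V' - V)
        have he : (ℓ:ℝ) - (V' - V) = V - V' + ℓ := by ring
        rw [he] at h
        linarith
      have e1 : |U - U' + (ℓ:ℝ)| ^ (-α₁) ≤ (|(ℓ:ℝ)| - 1) ^ (-α₁) :=
        Real.rpow_le_rpow_of_nonpos hc hb1 (neg_nonpos.mpr hα₁)
      have e2 : |V - V' + (ℓ:ℝ)| ^ (-α₂) ≤ (|(ℓ:ℝ)| - 1) ^ (-α₂) :=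
        Real.rpow_le_rpow_of_nonpos hc hb2 (neg_nonpos.mpr hα₂)
      have hF1 := (hFpos U V hU hV).le
      have hF2 := (hFpos U' V' hU' hV').le
      have hmul : |U - U' + (ℓ:ℝ)| ^ (-α₁) * |V - V' + (ℓ:ℝ)| ^ (-α₂)
          ≤ (|(ℓ:ℝ)| - 1) ^ (-α₁) * (|(ℓ:ℝ)| - 1) ^ (-α₂) :=
        mul_le_mul e1 e2 (Real.rpow_nonneg (abs_nonneg _) _) (Real.rpow_nonneg hc.le _)
      have hrw : (|(ℓ:ℝ)| - 1) ^ (-α₁) * (|(ℓ:ℝ)| - 1) ^ (-α₂)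
          = (|(ℓ:ℝ)| - 1) ^ (-(α₁ + α₂)) := by
        rw [← Real.rpow_add hc]; ring_nf
      calc |U - U' + (ℓ:ℝ)| ^ (-α₁) * |V - V' + (ℓ:ℝ)| ^ (-α₂) * F U V * F U' V'
          = (|U - U' + (ℓ:ℝ)| ^ (-α₁) * |V - V' + (ℓ:ℝ)| ^ (-α₂)) * (F U V * F U' V') := by
            ring
        _ ≤ ((|(ℓ:ℝ)| - 1) ^ (-α₁) * (|(ℓ:ℝ)| - 1) ^ (-α₂)) * (F U V * F U' V') :=
            mul_le_mul_of_nonneg_right hmul (mul_nonneg hF1 hF2)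
        _ = (|(ℓ:ℝ)| - 1) ^ (-(α₁ + α₂)) * (F U V * F U' V') := by rw [hrw]
    refine hmono.trans ?_
    rw [integral_const_mul, hprod]
  -- combinatorial part
  set K : ℝ := max (max (Δ 0) (Δ 1)) (Δ (-1)) with hKdef
  have hK0 : 0 ≤ K := (hΔ0 0).trans ((le_max_left _ _).trans (le_max_left _ _))
  set G : ℝ := 4 * (γ * γ) with hGdef
  have hG0 : 0 ≤ G := by positivity
  set h : ℕ → ℝ := fun k => if k ≤ 1 then K else G * (k:ℝ) ^ (-(α₁ + α₂)) with hhdef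
  have hh0 : ∀ k, 0 ≤ h k := by
    intro k
    simp only [hhdef]
    split
    · exact hK0
    · exact mul_nonneg hG0 (Real.rpow_nonneg (Nat.cast_nonneg _) _)
  have hDh : ∀ ℓ : ℤ, Δ ℓ ≤ h ℓ.natAbs := by
    intro ℓ
    by_cases hcase : ℓ.natAbs ≤ 1
    · have hor : ℓ = 0 ∨ ℓ = 1 ∨ ℓ = -1 := by omega
      simp only [hhdef, if_pos hcase]
      rcases hor with rfl | rfl | rfl
      · exact (le_max_left _ _).trans (le_max_left _ _)
      · exact (le_max_right _ _).trans (le_max_left _ _)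
      · exact le_max_right _ _
    · push_neg at hcase
      have h2 : 2 ≤ ℓ.natAbs := hcase
      refine (key ℓ h2).trans ?_
      simp only [hhdef, if_neg (by omega : ¬ ℓ.natAbs ≤ 1)]
      have hcast : |(ℓ:ℝ)| = (ℓ.natAbs : ℝ) := by
        rw [← Int.cast_abs, Int.abs_eq_natAbs, Int.cast_natCast]
      rw [hcast]
      set k : ℕ := ℓ.natAbs
      have hk2 : (2:ℝ) ≤ (k:ℝ) := by exact_mod_cast h2
      have hhalf : (0:ℝ) < (k:ℝ)/2 := by linarith
      have hle : (k:ℝ)/2 ≤ (k:ℝ) - 1 := by linarith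
      have step1 : ((k:ℝ) - 1) ^ (-(α₁+α₂)) ≤ ((k:ℝ)/2) ^ (-(α₁+α₂)) :=
        Real.rpow_le_rpow_of_nonpos hhalf hle (by linarith)
      have step2 : ((k:ℝ)/2) ^ (-(α₁+α₂)) = (k:ℝ) ^ (-(α₁+α₂)) * (2:ℝ) ^ (α₁+α₂) := by
        rw [Real.div_rpow (by positivity) (by norm_num),
          Real.rpow_neg (by norm_num : (0:ℝ) ≤ 2), div_eq_mul_inv, inv_inv]
      have step3 : (2:ℝ) ^ (α₁+α₂) ≤ 4 := by
        have h1 : (2:ℝ) ^ (α₁+α₂) ≤ (2:ℝ) ^ (2:ℝ) :=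
          Real.rpow_le_rpow_of_exponent_le one_le_two (by linarith)
        have h4 : (2:ℝ) ^ (2:ℝ) = 4 := by
          rw [show (2:ℝ) = ((2:ℕ):ℝ) from by norm_num, Real.rpow_natCast]; norm_num
        linarith
      have hA0 : (0:ℝ) ≤ (k:ℝ) ^ (-(α₁+α₂)) := Real.rpow_nonneg (Nat.cast_nonneg _) _
      have hgg : (0:ℝ) ≤ γ * γ := by positivity
      calc ((k:ℝ) - 1) ^ (-(α₁+α₂)) * (γ * γ)
          ≤ ((k:ℝ)/2) ^ (-(α₁+α₂)) * (γ * γ) := mul_le_mul_of_nonneg_right step1 hgg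
        _ = ((k:ℝ) ^ (-(α₁+α₂)) * (2:ℝ) ^ (α₁+α₂)) * (γ * γ) := by rw [step2]
        _ ≤ ((k:ℝ) ^ (-(α₁+α₂)) * 4) * (γ * γ) :=
            mul_le_mul_of_nonneg_right (mul_le_mul_of_nonneg_left step3 hA0) hgg
        _ = G * (k:ℝ) ^ (-(α₁+α₂)) := by rw [hGdef]; ring
  -- row bound
  have hrow : ∀ N : ℕ, ∀ i : ℕ, i < N →
      ∑ j ∈ range N, Δ ((i:ℤ) - (j:ℤ)) ≤ 2 * ∑ k ∈ range N, h k := by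
    intro N i hi
    have step1 : ∑ j ∈ range N, Δ ((i:ℤ) - (j:ℤ))
        ≤ ∑ j ∈ range N, h (((i:ℤ) - (j:ℤ)).natAbs) :=
      sum_le_sum fun j _ => hDh _
    refine step1.trans ?_
    rw [← sum_filter_add_sum_filter_not (range N) (fun j => j ≤ i), two_mul]
    refine add_le_add ?_ ?_
    · calc ∑ j ∈ (range N).filter (fun j => j ≤ i), h (((i:ℤ) - (j:ℤ)).natAbs)
          = ∑ j ∈ (range N).filter (fun j => j ≤ i), h (i - j) := by
            refine sum_congr rfl fun j hj => ?_
            simp only [mem_filter, mem_range] at hj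
            congr 1
            omega
        _ = ∑ k ∈ ((range N).filter (fun j => j ≤ i)).image (fun j => i - j), h k := by
            refine (Finset.sum_image ?_).symm
            intro a ha b hb hab
            simp only [Finset.mem_coe, mem_filter, mem_range] at ha hb
            omega
        _ ≤ ∑ k ∈ range N, h k := by
            refine sum_le_sum_of_subset_of_nonneg ?_ fun k _ _ => hh0 k
            intro k hk
            simp only [mem_image, mem_filter, mem_range] at hk
            obtain ⟨j, ⟨hjN, hji⟩, rfl⟩ := hk
            simp only [mem_range]
            omega
    · calc ∑ j ∈ (range N).filter (fun j => ¬ j ≤ i), h (((i:ℤ) - (j:ℤ)).natAbs)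
          = ∑ j ∈ (range N).filter (fun j => ¬ j ≤ i), h (j - i) := by
            refine sum_congr rfl fun j hj => ?_
            simp only [mem_filter, mem_range] at hj
            congr 1
            omega
        _ = ∑ k ∈ ((range N).filter (fun j => ¬ j ≤ i)).image (fun j => j - i), h k := by
            refine (Finset.sum_image ?_).symm
            intro a ha b hb hab
            simp only [Finset.mem_coe, mem_filter, mem_range] at ha hb
            simp only at hab
            omega
        _ ≤ ∑ k ∈ range N, h k := by
            refine sum_le_sum_of_subset_of_nonneg ?_ fun k _ _ => hh0 k
            intro k hk
            simp only [mem_image, mem_filter, mem_range] at hk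
            obtain ⟨j, ⟨hjN, hji⟩, rfl⟩ := hk
            simp only [mem_range]
            omega
  -- sum of h over range N
  have hsumh : ∀ N : ℕ, 2 ≤ N →
      ∑ k ∈ range N, h k = 2*K + G * ∑ k ∈ Ico 2 N, (k:ℝ) ^ (-(α₁ + α₂)) := by
    intro N hN
    rw [range_eq_Ico, ← sum_Ico_consecutive _ (Nat.zero_le 2) hN]
    congr 1
    · rw [← range_eq_Ico, Finset.sum_range_succ, Finset.sum_range_one]
      simp only [hhdef]
      norm_num
      ring
    · rw [Finset.mul_sum]
      refine sum_congr rfl fun k hk => ?_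
      rw [mem_Ico] at hk
      simp only [hhdef, if_neg (by omega : ¬ k ≤ 1)]
  -- global bound
  have hglobal : ∀ N : ℕ, 2 ≤ N →
      ∑ i ∈ range N, ∑ j ∈ range N, Δ ((i:ℤ) - (j:ℤ))
        ≤ 4*K*(N:ℝ) + 2*G*(∑ k ∈ Ico 2 N, (k:ℝ) ^ (-(α₁ + α₂)))*(N:ℝ) := by
    intro N hN
    have t1 : ∑ i ∈ range N, ∑ j ∈ range N, Δ ((i:ℤ) - (j:ℤ))
        ≤ ∑ _i ∈ range N, (2 * ∑ k ∈ range N, h k) :=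
      sum_le_sum fun i hi => hrow N i (mem_range.mp hi)
    rw [sum_const, card_range, nsmul_eq_mul] at t1
    rw [hsumh N hN] at t1
    calc ∑ i ∈ range N, ∑ j ∈ range N, Δ ((i:ℤ) - (j:ℤ))
        ≤ (N:ℝ) * (2 * (2*K + G * ∑ k ∈ Ico 2 N, (k:ℝ) ^ (-(α₁ + α₂)))) := t1
      _ = 4*K*(N:ℝ) + 2*G*(∑ k ∈ Ico 2 N, (k:ℝ) ^ (-(α₁ + α₂)))*(N:ℝ) := by ring
  by_cases hs1 : α₁ + α₂ = 1
  · -- critical case : logarithmic factor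
    have hlog2 : 0 < Real.log 2 := Real.log_pos one_lt_two
    refine ⟨4*K/Real.log 2 + 4*G + 1, ?_, ?_⟩
    · have h1 : 0 ≤ 4*K/Real.log 2 := div_nonneg (by linarith) hlog2.le
      linarith
    intro N hN
    have hN2 : (2:ℝ) ≤ (N:ℝ) := by exact_mod_cast hN
    have hlogN : Real.log 2 ≤ Real.log N := Real.log_le_log two_pos hN2
    have hlogN0 : 0 < Real.log N := lt_of_lt_of_le hlog2 hlogN
    -- bound the tail sum by 2 log N
    have hT : ∑ k ∈ Ico 2 N, (k:ℝ) ^ (-(α₁ + α₂)) ≤ 2 * Real.log N := by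
      rw [hs1]
      have step : ∀ k ∈ Ico 2 N,
          (k:ℝ) ^ (-(1:ℝ)) ≤ 2*(Real.log ((k+1:ℕ):ℝ) - Real.log (k:ℝ)) := by
        intro k hk
        rw [mem_Ico] at hk
        have hk2 : (2:ℝ) ≤ (k:ℝ) := by exact_mod_cast hk.1
        have hkpos : (0:ℝ) < (k:ℝ) := by linarith
        have hx : (0:ℝ) < (k:ℝ)/((k:ℝ)+1) := by positivity
        have hlog := Real.log_le_sub_one_of_pos hx
        rw [Real.log_div (by linarith) (by linarith)] at hlog
        have heq : (k:ℝ)/((k:ℝ)+1) - 1 = -(1/((k:ℝ)+1)) := by field_simp; ring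
        rw [heq] at hlog
        have h1 : 1/((k:ℝ)+1) ≤ Real.log ((k:ℝ)+1) - Real.log (k:ℝ) := by linarith
        have h2 : (k:ℝ) ^ (-(1:ℝ)) = 1/(k:ℝ) := by
          rw [Real.rpow_neg_one, one_div]
        have h3 : 1/(k:ℝ) ≤ 2/((k:ℝ)+1) := by
          rw [div_le_div_iff₀ hkpos (by linarith : (0:ℝ) < (k:ℝ)+1)]
          linarith
        have hcast : ((k+1:ℕ):ℝ) = (k:ℝ) + 1 := by push_cast; ring
        rw [h2, hcast]
        have h4 : 2/((k:ℝ)+1) = 2*(1/((k:ℝ)+1)) := by ring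
        rw [h4] at h3
        nlinarith [h1, h3]
      calc ∑ k ∈ Ico 2 N, (k:ℝ) ^ (-(1:ℝ))
          ≤ ∑ k ∈ Ico 2 N, 2*(Real.log ((k+1:ℕ):ℝ) - Real.log (k:ℝ)) := sum_le_sum step
        _ ≤ ∑ k ∈ range N, 2*(Real.log ((k+1:ℕ):ℝ) - Real.log (k:ℝ)) := by
            refine sum_le_sum_of_subset_of_nonneg ?_ ?_
            · rw [range_eq_Ico]; exact Ico_subset_Ico (by omega) le_rfl
            · intro k _ _
              have hmono : Real.log (k:ℝ) ≤ Real.log ((k+1:ℕ):ℝ) := by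
                rcases Nat.eq_zero_or_pos k with rfl | hk
                · simp
                · exact Real.log_le_log (by exact_mod_cast hk) (by exact_mod_cast Nat.le_succ k)
              linarith
        _ = 2 * ∑ k ∈ range N, (Real.log ((k+1:ℕ):ℝ) - Real.log (k:ℝ)) := by
            rw [Finset.mul_sum]
        _ = 2 * (Real.log ((N:ℕ):ℝ) - Real.log ((0:ℕ):ℝ)) := by
            rw [Finset.sum_range_sub (fun k : ℕ => Real.log (k:ℝ))]
        _ = 2 * Real.log (N:ℝ) := by simp
    have base := hglobal N hN
    have hN0 : (0:ℝ) ≤ (N:ℝ) := by positivity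
    have e1 : 4*K ≤ (4*K/Real.log 2) * Real.log N := by
      rw [div_mul_eq_mul_div, le_div_iff₀ hlog2]
      have := mul_le_mul_of_nonneg_left hlogN (by linarith : (0:ℝ) ≤ 4*K)
      linarith
    have c1 : 4*K*(N:ℝ) ≤ (4*K/Real.log 2) * (N:ℝ) * Real.log N := by
      calc 4*K*(N:ℝ) ≤ ((4*K/Real.log 2) * Real.log N) * (N:ℝ) :=
            mul_le_mul_of_nonneg_right e1 hN0
        _ = (4*K/Real.log 2) * (N:ℝ) * Real.log N := by ring
    have c2 : 2*G*(∑ k ∈ Ico 2 N, (k:ℝ) ^ (-(α₁ + α₂)))*(N:ℝ)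
        ≤ 4*G*(N:ℝ)*Real.log N := by
      have := mul_le_mul_of_nonneg_left hT (by linarith : (0:ℝ) ≤ 2*G)
      calc 2*G*(∑ k ∈ Ico 2 N, (k:ℝ) ^ (-(α₁ + α₂)))*(N:ℝ)
          = (2*G*(∑ k ∈ Ico 2 N, (k:ℝ) ^ (-(α₁ + α₂))))*(N:ℝ) := by ring
        _ ≤ (2*G*(2*Real.log N))*(N:ℝ) := mul_le_mul_of_nonneg_right this hN0
        _ = 4*G*(N:ℝ)*Real.log N := by ring
    have c3 : 0 ≤ (N:ℝ)*Real.log N := mul_nonneg hN0 hlogN0.le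
    simp only [if_pos hs1, pow_one]
    calc ∑ i ∈ range N, ∑ j ∈ range N, Δ ((i:ℤ) - (j:ℤ))
        ≤ 4*K*(N:ℝ) + 2*G*(∑ k ∈ Ico 2 N, (k:ℝ) ^ (-(α₁ + α₂)))*(N:ℝ) := base
      _ ≤ (4*K/Real.log 2) * (N:ℝ) * Real.log N + 4*G*(N:ℝ)*Real.log N := add_le_add c1 c2
      _ ≤ (4*K/Real.log 2 + 4*G + 1) * (N:ℝ) * Real.log (N:ℝ) := by nlinarith
  · -- supercritical case : bounded tail
    have hs' : 1 < α₁ + α₂ := lt_of_le_of_ne hsum (Ne.symm hs1)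
    have hZsum : Summable (fun k : ℕ => ((k:ℝ) ^ (α₁ + α₂))⁻¹) :=
      Real.summable_nat_rpow_inv.mpr hs'
    set Z : ℝ := ∑' k : ℕ, ((k:ℝ) ^ (α₁ + α₂))⁻¹ with hZdef
    have hZ0 : 0 ≤ Z :=
      tsum_nonneg fun k => inv_nonneg.mpr (Real.rpow_nonneg (Nat.cast_nonneg _) _)
    refine ⟨4*K + 2*G*Z + 1, by nlinarith, ?_⟩
    intro N hN
    have hN0 : (0:ℝ) ≤ (N:ℝ) := by positivity
    have hT : ∑ k ∈ Ico 2 N, (k:ℝ) ^ (-(α₁ + α₂)) ≤ Z := by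
      have hcongr : ∀ k ∈ Ico 2 N, (k:ℝ) ^ (-(α₁ + α₂)) = ((k:ℝ) ^ (α₁ + α₂))⁻¹ :=
        fun k _ => Real.rpow_neg (Nat.cast_nonneg _) _
      rw [sum_congr rfl hcongr]
      exact Summable.sum_le_tsum _ (fun k _ => inv_nonneg.mpr (Real.rpow_nonneg (Nat.cast_nonneg _) _))
        hZsum
    have base := hglobal N hN
    have c2 : 2*G*(∑ k ∈ Ico 2 N, (k:ℝ) ^ (-(α₁ + α₂)))*(N:ℝ) ≤ 2*G*Z*(N:ℝ) := by
      have := mul_le_mul_of_nonneg_left hT (by linarith : (0:ℝ) ≤ 2*G)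
      calc 2*G*(∑ k ∈ Ico 2 N, (k:ℝ) ^ (-(α₁ + α₂)))*(N:ℝ)
          = (2*G*(∑ k ∈ Ico 2 N, (k:ℝ) ^ (-(α₁ + α₂))))*(N:ℝ) := by ring
        _ ≤ (2*G*Z)*(N:ℝ) := mul_le_mul_of_nonneg_right this hN0
        _ = 2*G*Z*(N:ℝ) := by ring
    simp only [if_neg hs1, pow_zero, mul_one]
    calc ∑ i ∈ range N, ∑ j ∈ range N, Δ ((i:ℤ) - (j:ℤ))
        ≤ 4*K*(N:ℝ) + 2*G*(∑ k ∈ Ico 2 N, (k:ℝ) ^ (-(α₁ + α₂)))*(N:ℝ) := base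
      _ ≤ 4*K*(N:ℝ) + 2*G*Z*(N:ℝ) := by linarith
      _ ≤ (4*K + 2*G*Z + 1) * (N:ℝ) := by nlinarith
end

section
/- Let α1, α2 ∈ [0,1) with α1 + α2 < 1, and let F : [0,1]² → (0,∞) be measurable with γ := ∫_{[0,1]²} F(U,V) dU dV < ∞. Assume Δ(ℓ) := ∫_{[0,1]^4} |U-U'+ℓ|^{-α1} |V-V'+ℓ|^{-α2} F(U,V) F(U',V') dU dV dU' dV' is finite for every integer ℓ. Then lim_{N→∞} N^{α1+α2-2} · ∑_{i=0}^{N-1} ∑_{j=0}^{N-1} Δ(i-j) = 2γ² / ((1-α1-α2)(2-α1-α2)). -/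
open MeasureTheory Finset Filter

-- integral evaluation
lemma aux_int (a : ℝ) (h0 : 0 ≤ a) (h1 : a < 1) (N : ℝ) (hN : 1 ≤ N) :
    ∫ x in (1:ℝ)..N, (N - x) * x^(-a)
      = N * (N^(1-a) - 1)/(1-a) - (N^(2-a) - 1)/(2-a) := by
  have huIcc : Set.uIcc (1:ℝ) N = Set.Icc 1 N := Set.uIcc_of_le hN
  have hcong : ∀ x ∈ Set.uIcc (1:ℝ) N, (N - x) * x^(-a) = N * x^(-a) - x^(1-a) := by
    intro x hx
    rw [huIcc] at hx
    have hx0 : (0:ℝ) < x := lt_of_lt_of_le one_pos hx.1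
    have : x^(1-a) = x * x^(-a) := by
      rw [show (1:ℝ) - a = 1 + (-a) by ring, Real.rpow_add hx0, Real.rpow_one]
    rw [this]; ring
  rw [intervalIntegral.integral_congr hcong]
  have i1 : IntervalIntegrable (fun x : ℝ => x^(-a)) volume 1 N :=
    intervalIntegral.intervalIntegrable_rpow' (by linarith)
  have i2 : IntervalIntegrable (fun x : ℝ => x^(1-a)) volume 1 N :=
    intervalIntegral.intervalIntegrable_rpow' (by linarith)
  rw [intervalIntegral.integral_sub (i1.const_mul N) i2,
    intervalIntegral.integral_const_mul, integral_rpow (Or.inl (by linarith)),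
    integral_rpow (Or.inl (by linarith)), Real.one_rpow, Real.one_rpow]
  norm_num
  ring_nf


lemma aux_rpow_lim (c : ℝ) (hc : c < 0) :
    Tendsto (fun N : ℕ => (N:ℝ)^c) atTop (nhds 0) := by
  have h := (tendsto_rpow_neg_atTop (y := -c) (by linarith)).comp
    tendsto_natCast_atTop_atTop
  simpa [Function.comp_def] using h

lemma aux_E (a : ℝ) (h0 : 0 ≤ a) (h1 : a < 1) (N : ℝ) (hN0 : 0 < N) :
    N^(a-2) * (N * (N^(1-a) - 1)/(1-a) - (N^(2-a) - 1)/(2-a))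
      = (1 - N^(a-1))/(1-a) - (1 - N^(a-2))/(2-a) := by
  have key : ∀ u v : ℝ, N^u * N^v = N^(u+v) := fun u v => (Real.rpow_add hN0 u v).symm
  have e2 : N^(a-2) * N = N^(a-1) := by
    have h : N^(a-2) * N^(1:ℝ) = N^(a-1) := by
      rw [key, show a-2+1 = a-1 by ring]
    rwa [Real.rpow_one] at h
  have e1 : N^(a-2) * N * N^(1-a) = 1 := by
    rw [e2, key, show a-1+(1-a) = (0:ℝ) by ring, Real.rpow_zero]
  have e3 : N^(a-2) * N^(2-a) = 1 := by
    rw [key, show a-2+(2-a) = (0:ℝ) by ring, Real.rpow_zero]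
  have h1a : (1:ℝ) - a ≠ 0 := by linarith
  have h2a : (2:ℝ) - a ≠ 0 := by linarith
  field_simp
  nlinarith [e1, e2, e3]


lemma aux_anti (a : ℝ) (h0 : 0 ≤ a) (N : ℝ) :
    AntitoneOn (fun x : ℝ => (N - x) * x^(-a)) (Set.Icc 1 N) := by
  intro x hx y hy hxy
  have hx0 : (0:ℝ) < x := lt_of_lt_of_le one_pos hx.1
  exact mul_le_mul (by linarith [hy.2, hx.2])
    (Real.rpow_le_rpow_of_nonpos hx0 hxy (neg_nonpos.2 h0))
    (Real.rpow_nonneg (le_of_lt (lt_of_lt_of_le hx0 hxy)) _)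
    (by linarith [hx.2])

lemma aux_bounds (a : ℝ) (h0 : 0 ≤ a) (n : ℕ) :
    (∫ x in (1:ℝ)..((n:ℝ)+1), (((n:ℝ)+1) - x) * x^(-a))
      ≤ (∑ k ∈ range (n+1), (((n:ℝ)+1) - ((k:ℝ)+1)) * (((k:ℝ)+1))^(-a)) ∧
    (∑ k ∈ range (n+1), (((n:ℝ)+1) - ((k:ℝ)+1)) * (((k:ℝ)+1))^(-a))
      ≤ (∫ x in (1:ℝ)..((n:ℝ)+1), (((n:ℝ)+1) - x) * x^(-a)) + n := by
  set N : ℝ := (n:ℝ) + 1 with hNdef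
  have hanti : AntitoneOn (fun x : ℝ => (N - x) * x^(-a)) (Set.Icc 1 (1 + (n:ℝ))) := by
    have h : (1:ℝ) + (n:ℝ) = N := by rw [hNdef]; ring
    rw [h]; exact aux_anti a h0 N
  have hub := hanti.integral_le_sum
  have hlb := hanti.sum_le_integral
  have hiv : (1:ℝ) + (n:ℕ) = N := by rw [hNdef]; ring
  rw [hiv] at hub hlb
  have hub' : (∑ i ∈ range n, (N - (1 + (i:ℝ))) * (1 + (i:ℝ))^(-a))
      = ∑ i ∈ range n, (N - ((i:ℝ)+1)) * (((i:ℝ)+1))^(-a) := by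
    refine Finset.sum_congr rfl fun k _ => by rw [add_comm 1 (k:ℝ)]
  have hlb' : (∑ i ∈ range n, (fun x : ℝ => (N - x) * x^(-a)) (1 + ((i+1 : ℕ):ℝ)))
      = ∑ i ∈ range n, (N - ((i:ℝ)+2)) * (((i:ℝ)+2))^(-a) := by
    refine Finset.sum_congr rfl fun k _ => ?_
    have h : (1:ℝ) + ((k+1 : ℕ):ℝ) = (k:ℝ) + 2 := by push_cast; ring
    simp only [h]
  rw [hub'] at hub
  rw [hlb'] at hlb
  constructor
  · refine le_trans hub ?_
    rw [Finset.sum_range_succ]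
    have hlast : (N - ((n:ℝ)+1)) * (((n:ℝ)+1))^(-a) = 0 := by
      rw [hNdef]; ring_nf
    rw [hlast, add_zero]
  · have hT : (∑ k ∈ range (n+1), (N - ((k:ℝ)+1)) * (((k:ℝ)+1))^(-a))
        = (∑ i ∈ range n, (N - ((i:ℝ)+2)) * (((i:ℝ)+2))^(-a)) + (N - 1) := by
      rw [Finset.sum_range_succ' (fun k => (N - ((k:ℝ)+1)) * (((k:ℝ)+1))^(-a)) n]
      have h00 : (N - (((0:ℕ):ℝ)+1)) * ((((0:ℕ):ℝ)+1))^(-a) = N - 1 := by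
        norm_num
      rw [h00]
      congr 1
      refine Finset.sum_congr rfl fun k _ => ?_
      have h : ((k+1 : ℕ):ℝ) + 1 = (k:ℝ) + 2 := by push_cast; ring
      rw [h]
    have hN1 : N - 1 ≤ (n:ℝ) := by rw [hNdef]; linarith
    rw [hT]
    linarith


lemma aux_T (a : ℝ) (h0 : 0 ≤ a) (h1 : a < 1) :
    Tendsto (fun N : ℕ => (N:ℝ)^(a-2) * ∑ k ∈ range N, ((N:ℝ) - ((k:ℝ)+1)) * (((k:ℝ)+1))^(-a))
      atTop (nhds (1/((1-a)*(2-a)))) := by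
  have h1a : (1:ℝ) - a ≠ 0 := by linarith
  have h2a : (2:ℝ) - a ≠ 0 := by linarith
  have l1 := ((aux_rpow_lim (a-1) (by linarith)).const_sub (1:ℝ)).div_const (1-a)
  have l2 := ((aux_rpow_lim (a-2) (by linarith)).const_sub (1:ℝ)).div_const (2-a)
  have hval : (1-(0:ℝ))/(1-a) - (1-0)/(2-a) = 1/((1-a)*(2-a)) := by
    field_simp
    ring
  have hlo : Tendsto (fun N : ℕ => (1 - (N:ℝ)^(a-1))/(1-a) - (1 - (N:ℝ)^(a-2))/(2-a))
      atTop (nhds (1/((1-a)*(2-a)))) := hval ▸ l1.sub l2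
  have hhi : Tendsto (fun N : ℕ => ((1 - (N:ℝ)^(a-1))/(1-a) - (1 - (N:ℝ)^(a-2))/(2-a)) + (N:ℝ)^(a-1))
      atTop (nhds (1/((1-a)*(2-a)))) := by
    have h := hlo.add (aux_rpow_lim (a-1) (by linarith))
    simpa using h
  refine tendsto_of_tendsto_of_tendsto_of_le_of_le' hlo hhi ?_ ?_
  · filter_upwards [eventually_ge_atTop 1] with N hN
    obtain ⟨n, rfl⟩ : ∃ n, N = n + 1 := ⟨N - 1, by omega⟩
    have hn0 : (0:ℝ) ≤ (n:ℝ) := Nat.cast_nonneg n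
    have hNr : ((n+1 : ℕ):ℝ) = (n:ℝ) + 1 := by push_cast; ring
    have hN1 : (1:ℝ) ≤ (n:ℝ)+1 := by linarith
    have hN0 : (0:ℝ) < (n:ℝ)+1 := by linarith
    have hpow : (0:ℝ) ≤ ((n:ℝ)+1)^(a-2) := Real.rpow_nonneg (le_of_lt hN0) _
    have hb := (aux_bounds a h0 n).1
    have hint := aux_int a h0 h1 ((n:ℝ)+1) hN1
    have hE := aux_E a h0 h1 ((n:ℝ)+1) hN0
    rw [hNr, ← hE]
    exact mul_le_mul_of_nonneg_left (hint ▸ hb) hpow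
  · filter_upwards [eventually_ge_atTop 1] with N hN
    obtain ⟨n, rfl⟩ : ∃ n, N = n + 1 := ⟨N - 1, by omega⟩
    have hn0 : (0:ℝ) ≤ (n:ℝ) := Nat.cast_nonneg n
    have hNr : ((n+1 : ℕ):ℝ) = (n:ℝ) + 1 := by push_cast; ring
    have hN1 : (1:ℝ) ≤ (n:ℝ)+1 := by linarith
    have hN0 : (0:ℝ) < (n:ℝ)+1 := by linarith
    have hpow : (0:ℝ) ≤ ((n:ℝ)+1)^(a-2) := Real.rpow_nonneg (le_of_lt hN0) _
    have hb := (aux_bounds a h0 n).2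
    have hint := aux_int a h0 h1 ((n:ℝ)+1) hN1
    have hE := aux_E a h0 h1 ((n:ℝ)+1) hN0
    have e2 : ((n:ℝ)+1)^(a-2) * ((n:ℝ)+1) = ((n:ℝ)+1)^(a-1) := by
      have h : ((n:ℝ)+1)^(a-2) * ((n:ℝ)+1)^(1:ℝ) = ((n:ℝ)+1)^(a-1) := by
        rw [← Real.rpow_add hN0, show a-2+1 = a-1 by ring]
      rwa [Real.rpow_one] at h
    rw [hNr]
    have h3 := mul_le_mul_of_nonneg_left hb hpow
    rw [hint] at h3
    have h4 : ((n:ℝ)+1)^(a-2) * (n:ℝ) ≤ ((n:ℝ)+1)^(a-1) := by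
      rw [← e2]
      exact mul_le_mul_of_nonneg_left (by linarith) hpow
    have h5 : ((n:ℝ)+1)^(a-2) * ((∫ x in (1:ℝ)..((n:ℝ)+1), (((n:ℝ)+1) - x) * x^(-a)) + (n:ℝ))
        = ((n:ℝ)+1)^(a-2) * (∫ x in (1:ℝ)..((n:ℝ)+1), (((n:ℝ)+1) - x) * x^(-a))
          + ((n:ℝ)+1)^(a-2) * (n:ℝ) := mul_add _ _ _
    rw [hint] at h5
    rw [hE] at h5
    linarith


lemma aux_reindex (g : ℤ → ℝ) : ∀ N : ℕ, (∑ i ∈ range N, ∑ j ∈ range N, g ((i:ℤ) - (j:ℤ)))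
    = N * g 0 + ∑ k ∈ range N, ((N:ℝ) - (k+1)) * (g (k+1) + g (-(k+1))) := by
  intro N
  induction N with
  | zero => simp
  | succ N ih =>
    have row : ∀ i : ℕ, ∑ j ∈ range (N+1), g ((i:ℤ) - j) = (∑ j ∈ range N, g ((i:ℤ) - j)) + g ((i:ℤ) - N) := by
      intro i; rw [Finset.sum_range_succ]
    have h1 : (∑ i ∈ range (N+1), ∑ j ∈ range (N+1), g ((i:ℤ) - (j:ℤ)))
        = (∑ i ∈ range N, ∑ j ∈ range N, g ((i:ℤ) - j)) + (∑ i ∈ range N, g ((i:ℤ) - N))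
          + ((∑ j ∈ range N, g ((N:ℤ) - j)) + g 0) := by
      rw [Finset.sum_range_succ]
      simp_rw [row]
      rw [Finset.sum_add_distrib]
      ring_nf
      simp only [neg_add_eq_sub]; ring
    have h2 : (∑ j ∈ range N, g ((N:ℤ) - j)) = ∑ k ∈ range N, g ((k:ℤ)+1) := by
      refine Finset.sum_nbij' (fun j => N - 1 - j) (fun k => N - 1 - k) ?_ ?_ ?_ ?_ ?_ <;>
        intro x hx <;> simp only [Finset.mem_range] at * <;> try omega
      congr 1
      push_cast [Nat.cast_sub, Nat.sub_sub]
      omega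
    have h3 : (∑ i ∈ range N, g ((i:ℤ) - N)) = ∑ k ∈ range N, g (-((k:ℤ)+1)) := by
      refine Finset.sum_nbij' (fun j => N - 1 - j) (fun k => N - 1 - k) ?_ ?_ ?_ ?_ ?_ <;>
        intro x hx <;> simp only [Finset.mem_range] at * <;> try omega
      congr 1
      push_cast [Nat.cast_sub, Nat.sub_sub]
      omega
    rw [h1, h2, h3, ih]
    push_cast
    rw [Finset.sum_range_succ]
    have h4 : ∑ k ∈ range N, (((N:ℝ)+1) - (k+1)) * (g (k+1) + g (-(k+1)))
        = ∑ k ∈ range N, (((N:ℝ) - (k+1)) * (g (k+1) + g (-(k+1))) + (g (k+1) + g (-(k+1)))) := by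
      refine Finset.sum_congr rfl fun k _ => by ring
    rw [h4, Finset.sum_add_distrib, Finset.sum_add_distrib]
    ring


lemma aux_dist (t : ℝ) (ht : |t| ≤ 1) (ℓ : ℤ) (hℓ : 2 ≤ |ℓ|) :
    ((|ℓ|:ℤ):ℝ) - 1 ≤ |t + ℓ| ∧ |t + ℓ| ≤ ((|ℓ|:ℤ):ℝ) + 1 := by
  obtain ⟨ht1, ht2⟩ := abs_le.mp ht
  have h2 : 2 ≤ ℓ ∨ ℓ ≤ -2 := by rcases abs_cases ℓ with ⟨h,_⟩|⟨h,_⟩ <;> omega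
  rcases h2 with h | h
  · have hr : (2:ℝ) ≤ (ℓ:ℝ) := by exact_mod_cast h
    have habs : (|ℓ|:ℤ) = ℓ := abs_of_nonneg (by omega)
    rw [habs, abs_of_pos (by linarith : (0:ℝ) < t + ℓ)]
    constructor <;> linarith
  · have hr : (ℓ:ℝ) ≤ -2 := by exact_mod_cast h
    have habs : (|ℓ|:ℤ) = -ℓ := abs_of_nonpos (by omega)
    rw [habs, abs_of_neg (by linarith : t + (ℓ:ℝ) < 0)]
    push_cast
    constructor <;> linarith


lemma aux_delta (α₁ α₂ : ℝ) (hα₁ : 0 ≤ α₁) (hα₂ : 0 ≤ α₂)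
    (F : ℝ → ℝ → ℝ)
    (hFpos : ∀ U V : ℝ, U ∈ Set.Icc (0:ℝ) 1 → V ∈ Set.Icc (0:ℝ) 1 → 0 < F U V)
    (γ : ℝ)
    (hγ2 : (∫ p in (Set.Icc (0:ℝ) 1 ×ˢ Set.Icc (0:ℝ) 1) ×ˢ (Set.Icc (0:ℝ) 1 ×ˢ Set.Icc (0:ℝ) 1),
      F p.1.1 p.1.2 * F p.2.1 p.2.2) = γ^2)
    (hFF : IntegrableOn (fun p : (ℝ × ℝ) × (ℝ × ℝ) => F p.1.1 p.1.2 * F p.2.1 p.2.2)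
      ((Set.Icc (0:ℝ) 1 ×ˢ Set.Icc (0:ℝ) 1) ×ˢ (Set.Icc (0:ℝ) 1 ×ˢ Set.Icc (0:ℝ) 1)))
    (Δ : ℤ → ℝ)
    (hΔfin : ∀ ℓ : ℤ, IntegrableOn
      (fun p : (ℝ × ℝ) × (ℝ × ℝ) =>
        |p.1.1 - p.2.1 + (ℓ:ℝ)| ^ (-α₁) * |p.1.2 - p.2.2 + (ℓ:ℝ)| ^ (-α₂) *
          F p.1.1 p.1.2 * F p.2.1 p.2.2)
      ((Set.Icc (0:ℝ) 1 ×ˢ Set.Icc (0:ℝ) 1) ×ˢ (Set.Icc (0:ℝ) 1 ×ˢ Set.Icc (0:ℝ) 1)))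
    (hΔ : ∀ ℓ : ℤ, Δ ℓ =
      ∫ p in (Set.Icc (0:ℝ) 1 ×ˢ Set.Icc (0:ℝ) 1) ×ˢ (Set.Icc (0:ℝ) 1 ×ˢ Set.Icc (0:ℝ) 1),
        |p.1.1 - p.2.1 + (ℓ:ℝ)| ^ (-α₁) * |p.1.2 - p.2.2 + (ℓ:ℝ)| ^ (-α₂) *
          F p.1.1 p.1.2 * F p.2.1 p.2.2)
    (ℓ : ℤ) (hℓ : 2 ≤ |ℓ|) :
    (((|ℓ|:ℤ):ℝ)+1)^(-(α₁+α₂)) * γ^2 ≤ Δ ℓ ∧ Δ ℓ ≤ (((|ℓ|:ℤ):ℝ)-1)^(-(α₁+α₂)) * γ^2 := by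
  set S : Set (ℝ × ℝ) := Set.Icc (0:ℝ) 1 ×ˢ Set.Icc (0:ℝ) 1 with hS
  have hmeas : MeasurableSet (S ×ˢ S) :=
    ((measurableSet_Icc.prod measurableSet_Icc).prod (measurableSet_Icc.prod measurableSet_Icc))
  set L : ℝ := ((|ℓ|:ℤ):ℝ) with hL
  have hL2 : (2:ℝ) ≤ L := by rw [hL]; exact_mod_cast hℓ
  have hLm : (0:ℝ) < L - 1 := by linarith
  have hLp : (0:ℝ) < L + 1 := by linarith
  have hsplitm : (L-1)^(-(α₁+α₂)) = (L-1)^(-α₁) * (L-1)^(-α₂) := by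
    rw [show -(α₁+α₂) = -α₁ + -α₂ by ring, Real.rpow_add hLm]
  have hsplitp : (L+1)^(-(α₁+α₂)) = (L+1)^(-α₁) * (L+1)^(-α₂) := by
    rw [show -(α₁+α₂) = -α₁ + -α₂ by ring, Real.rpow_add hLp]
  -- pointwise facts
  have hpt : ∀ p : (ℝ × ℝ) × (ℝ × ℝ), p ∈ S ×ˢ S →
      ((L+1)^(-α₁) * (L+1)^(-α₂) * (F p.1.1 p.1.2 * F p.2.1 p.2.2) ≤
        |p.1.1 - p.2.1 + (ℓ:ℝ)| ^ (-α₁) * |p.1.2 - p.2.2 + (ℓ:ℝ)| ^ (-α₂) *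
          F p.1.1 p.1.2 * F p.2.1 p.2.2 ∧
      |p.1.1 - p.2.1 + (ℓ:ℝ)| ^ (-α₁) * |p.1.2 - p.2.2 + (ℓ:ℝ)| ^ (-α₂) *
          F p.1.1 p.1.2 * F p.2.1 p.2.2 ≤
        (L-1)^(-α₁) * (L-1)^(-α₂) * (F p.1.1 p.1.2 * F p.2.1 p.2.2)) := by
    rintro ⟨⟨u, v⟩, ⟨u', v'⟩⟩ ⟨⟨hu, hv⟩, ⟨hu', hv'⟩⟩
    simp only [Set.mem_Icc] at hu hv hu' hv'
    have hF1 : 0 < F u v := hFpos u v (Set.mem_Icc.mpr hu) (Set.mem_Icc.mpr hv)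
    have hF2 : 0 < F u' v' := hFpos u' v' (Set.mem_Icc.mpr hu') (Set.mem_Icc.mpr hv')
    have hd1 := aux_dist (u - u') (abs_le.mpr ⟨by linarith [hu.1, hu.2, hu'.1, hu'.2], by linarith [hu.1, hu.2, hu'.1, hu'.2]⟩) ℓ hℓ
    have hd2 := aux_dist (v - v') (abs_le.mpr ⟨by linarith [hv.1, hv.2, hv'.1, hv'.2], by linarith [hv.1, hv.2, hv'.1, hv'.2]⟩) ℓ hℓ
    have hA1 : (L+1)^(-α₁) ≤ |u - u' + ℓ| ^ (-α₁) :=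
      Real.rpow_le_rpow_of_nonpos (by linarith [hd1.1]) hd1.2 (neg_nonpos.2 hα₁)
    have hA2 : |u - u' + ℓ| ^ (-α₁) ≤ (L-1)^(-α₁) :=
      Real.rpow_le_rpow_of_nonpos hLm hd1.1 (neg_nonpos.2 hα₁)
    have hB1 : (L+1)^(-α₂) ≤ |v - v' + ℓ| ^ (-α₂) :=
      Real.rpow_le_rpow_of_nonpos (by linarith [hd2.1]) hd2.2 (neg_nonpos.2 hα₂)
    have hB2 : |v - v' + ℓ| ^ (-α₂) ≤ (L-1)^(-α₂) :=
      Real.rpow_le_rpow_of_nonpos hLm hd2.1 (neg_nonpos.2 hα₂)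
    have hAnn : (0:ℝ) ≤ |u - u' + ℓ| ^ (-α₁) := Real.rpow_nonneg (abs_nonneg _) _
    have hBnn : (0:ℝ) ≤ |v - v' + ℓ| ^ (-α₂) := Real.rpow_nonneg (abs_nonneg _) _
    have hpnn : (0:ℝ) ≤ (L+1)^(-α₁) := Real.rpow_nonneg (le_of_lt hLp) _
    have hpnn2 : (0:ℝ) ≤ (L+1)^(-α₂) := Real.rpow_nonneg (le_of_lt hLp) _
    have hmnn : (0:ℝ) ≤ (L-1)^(-α₁) := Real.rpow_nonneg (le_of_lt hLm) _
    have hmnn2 : (0:ℝ) ≤ (L-1)^(-α₂) := Real.rpow_nonneg (le_of_lt hLm) _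
    constructor
    · have h := mul_le_mul hA1 hB1 hpnn2 hAnn
      nlinarith [mul_pos hF1 hF2]
    · have h := mul_le_mul hA2 hB2 hBnn hmnn
      nlinarith [mul_pos hF1 hF2]
  have hconstm : IntegrableOn (fun p : (ℝ × ℝ) × (ℝ × ℝ) =>
      (L-1)^(-α₁) * (L-1)^(-α₂) * (F p.1.1 p.1.2 * F p.2.1 p.2.2)) (S ×ˢ S) :=
    hFF.const_mul _
  have hconstp : IntegrableOn (fun p : (ℝ × ℝ) × (ℝ × ℝ) =>
      (L+1)^(-α₁) * (L+1)^(-α₂) * (F p.1.1 p.1.2 * F p.2.1 p.2.2)) (S ×ˢ S) :=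
    hFF.const_mul _
  constructor
  · rw [hΔ ℓ, hsplitp, ← hγ2, ← integral_const_mul]
    exact setIntegral_mono_on hconstp (hΔfin ℓ) hmeas (fun p hp => (hpt p hp).1)
  · rw [hΔ ℓ, hsplitm, ← hγ2, ← integral_const_mul]
    exact setIntegral_mono_on (hΔfin ℓ) hconstm hmeas (fun p hp => (hpt p hp).2)


lemma aux_main (a γ2 C0 : ℝ) (h0 : 0 ≤ a) (h1 : a < 1) (hγ2 : 0 ≤ γ2)
    (T f : ℕ → ℝ)
    (hTlim : Tendsto (fun N : ℕ => (N:ℝ)^(a-2) * T N) atTop (nhds (1/((1-a)*(2-a)))))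
    (hub : ∀ m : ℕ, f (m+1) ≤ ((m+1:ℕ):ℝ) * C0 + 2*γ2 * T (m+1))
    (hlb : ∀ m : ℕ, 2*γ2 * T (m+2) - 4*γ2*((m+1:ℕ):ℝ) ≤ f (m+1)) :
    Tendsto (fun N : ℕ => (N:ℝ)^(a-2) * f N) atTop (nhds (2*γ2/((1-a)*(2-a)))) := by
  have h1a : (1:ℝ) - a ≠ 0 := by linarith
  have h2a : (2:ℝ) - a ≠ 0 := by linarith
  have e2 : ∀ N : ℕ, 1 ≤ N → (N:ℝ)^(a-2)*(N:ℝ) = (N:ℝ)^(a-1) := by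
    intro N hN
    have hN0 : (0:ℝ) < N := by exact_mod_cast hN
    have h : (N:ℝ)^(a-2) * (N:ℝ)^(1:ℝ) = (N:ℝ)^(a-1) := by
      rw [← Real.rpow_add hN0, show a-2+1 = a-1 by ring]
    rwa [Real.rpow_one] at h
  have hpow0 : Tendsto (fun N : ℕ => (N:ℝ)^(a-1)) atTop (nhds 0) :=
    aux_rpow_lim (a-1) (by linarith)
  -- limit of N^(a-2) * T (N+1)
  have hcomp : Tendsto (fun N : ℕ => (((N+1:ℕ)):ℝ)^(a-2) * T (N+1)) atTop
      (nhds (1/((1-a)*(2-a)))) := hTlim.comp (tendsto_add_atTop_nat 1)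
  have hbase : Tendsto (fun N : ℕ => ((N:ℝ)+1)/(N:ℝ)) atTop (nhds 1) := by
    have h := tendsto_const_nhds (x := (1:ℝ)) (f := atTop (α := ℕ)) |>.add
      tendsto_one_div_atTop_nhds_zero_nat
    rw [add_zero] at h
    refine h.congr' ?_
    filter_upwards [eventually_ge_atTop 1] with N hN
    have hN0 : (N:ℝ) ≠ 0 := by positivity
    field_simp
  have hrat : Tendsto (fun N : ℕ => (((N:ℝ)+1)/(N:ℝ))^(2-a)) atTop (nhds 1) := by
    have h := (Real.continuousAt_rpow_const 1 (2-a) (Or.inl one_ne_zero)).tendsto.comp hbase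
    rwa [Real.one_rpow] at h
  have hT2 : Tendsto (fun N : ℕ => (N:ℝ)^(a-2) * T (N+1)) atTop (nhds (1/((1-a)*(2-a)))) := by
    have h := hrat.mul hcomp
    rw [one_mul] at h
    refine h.congr' ?_
    filter_upwards [eventually_ge_atTop 1] with N hN
    have hN0 : (0:ℝ) < N := by exact_mod_cast hN
    have hN10 : (0:ℝ) < (N:ℝ)+1 := by linarith
    have hkey : (((N:ℝ)+1)/(N:ℝ))^(2-a) * ((N:ℝ)+1)^(a-2) = (N:ℝ)^(a-2) := by
      rw [Real.div_rpow (le_of_lt hN10) (le_of_lt hN0)]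
      rw [div_mul_eq_mul_div, ← Real.rpow_add hN10, show (2-a)+(a-2) = (0:ℝ) by ring,
        Real.rpow_zero, show a-2 = -(2-a) by ring, Real.rpow_neg (le_of_lt hN0)]
      exact one_div _
    have hcast : (((N+1:ℕ)):ℝ) = (N:ℝ)+1 := by push_cast; ring
    rw [hcast, ← mul_assoc, hkey]
  have hval : 2*γ2 * (1/((1-a)*(2-a))) - 4*γ2*0 = 2*γ2/((1-a)*(2-a)) := by ring
  have hlow : Tendsto (fun N : ℕ => 2*γ2*((N:ℝ)^(a-2)*T (N+1)) - 4*γ2*((N:ℝ)^(a-1)))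
      atTop (nhds (2*γ2/((1-a)*(2-a)))) := hval ▸ ((hT2.const_mul (2*γ2)).sub (hpow0.const_mul (4*γ2)))
  have hval2 : 0*C0 + 2*γ2 * (1/((1-a)*(2-a))) = 2*γ2/((1-a)*(2-a)) := by ring
  have hup : Tendsto (fun N : ℕ => (N:ℝ)^(a-1)*C0 + 2*γ2*((N:ℝ)^(a-2)*T N))
      atTop (nhds (2*γ2/((1-a)*(2-a)))) := hval2 ▸ ((hpow0.mul_const C0).add (hTlim.const_mul (2*γ2)))
  refine tendsto_of_tendsto_of_tendsto_of_le_of_le' hlow hup ?_ ?_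
  · filter_upwards [eventually_ge_atTop 1] with N hN
    obtain ⟨m, rfl⟩ : ∃ m, N = m + 1 := ⟨N - 1, by omega⟩
    have hN0 : (0:ℝ) < ((m+1:ℕ):ℝ) := by positivity
    have hpow : (0:ℝ) ≤ ((m+1:ℕ):ℝ)^(a-2) := Real.rpow_nonneg (le_of_lt hN0) _
    have h := mul_le_mul_of_nonneg_left (hlb m) hpow
    calc 2*γ2*(((m+1:ℕ):ℝ)^(a-2)*T (m+1+1)) - 4*γ2*((m+1:ℕ):ℝ)^(a-1)
        = ((m+1:ℕ):ℝ)^(a-2) * (2*γ2 * T (m+2) - 4*γ2*((m+1:ℕ):ℝ)) := by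
          rw [mul_sub, ← e2 (m+1) (by omega)]
          ring_nf
      _ ≤ _ := h
  · filter_upwards [eventually_ge_atTop 1] with N hN
    obtain ⟨m, rfl⟩ : ∃ m, N = m + 1 := ⟨N - 1, by omega⟩
    have hN0 : (0:ℝ) < ((m+1:ℕ):ℝ) := by positivity
    have hpow : (0:ℝ) ≤ ((m+1:ℕ):ℝ)^(a-2) := Real.rpow_nonneg (le_of_lt hN0) _
    have h := mul_le_mul_of_nonneg_left (hub m) hpow
    calc ((m+1:ℕ):ℝ)^(a-2) * f (m+1) ≤ ((m+1:ℕ):ℝ)^(a-2) * (((m+1:ℕ):ℝ) * C0 + 2*γ2 * T (m+1)) := h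
      _ = ((m+1:ℕ):ℝ)^(a-1)*C0 + 2*γ2*(((m+1:ℕ):ℝ)^(a-2)*T (m+1)) := by
          rw [mul_add, ← e2 (m+1) (by omega)]
          ring_nf


theorem stmt_4 (α₁ α₂ : ℝ) (hα₁ : 0 ≤ α₁) (hα₁' : α₁ < 1) (hα₂ : 0 ≤ α₂) (hα₂' : α₂ < 1)
    (hsum : α₁ + α₂ < 1)
    (F : ℝ → ℝ → ℝ) (hFmeas : Measurable (Function.uncurry F))
    (hFpos : ∀ U V : ℝ, U ∈ Set.Icc (0:ℝ) 1 → V ∈ Set.Icc (0:ℝ) 1 → 0 < F U V)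
    -- `γ < ∞` : `F` is integrable on the unit square
    (hγfin : IntegrableOn (fun p : ℝ × ℝ => F p.1 p.2)
      (Set.Icc (0:ℝ) 1 ×ˢ Set.Icc (0:ℝ) 1))
    (γ : ℝ) (hγ : γ = ∫ p in Set.Icc (0:ℝ) 1 ×ˢ Set.Icc (0:ℝ) 1, F p.1 p.2)
    (Δ : ℤ → ℝ)
    -- `Δ(ℓ) < ∞` : the integrand defining `Δ(ℓ)` is integrable on `[0,1]^4`
    (hΔfin : ∀ ℓ : ℤ, IntegrableOn
      (fun p : (ℝ × ℝ) × (ℝ × ℝ) =>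
        |p.1.1 - p.2.1 + (ℓ:ℝ)| ^ (-α₁) * |p.1.2 - p.2.2 + (ℓ:ℝ)| ^ (-α₂) *
          F p.1.1 p.1.2 * F p.2.1 p.2.2)
      ((Set.Icc (0:ℝ) 1 ×ˢ Set.Icc (0:ℝ) 1) ×ˢ (Set.Icc (0:ℝ) 1 ×ˢ Set.Icc (0:ℝ) 1)))
    (hΔ : ∀ ℓ : ℤ, Δ ℓ =
      ∫ p in (Set.Icc (0:ℝ) 1 ×ˢ Set.Icc (0:ℝ) 1) ×ˢ (Set.Icc (0:ℝ) 1 ×ˢ Set.Icc (0:ℝ) 1),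
        |p.1.1 - p.2.1 + (ℓ:ℝ)| ^ (-α₁) * |p.1.2 - p.2.2 + (ℓ:ℝ)| ^ (-α₂) *
          F p.1.1 p.1.2 * F p.2.1 p.2.2) :
    Tendsto (fun N : ℕ =>
        (N:ℝ) ^ (α₁ + α₂ - 2) * ∑ i ∈ range N, ∑ j ∈ range N, Δ ((i:ℤ) - (j:ℤ)))
      atTop (nhds (2 * γ ^ 2 / ((1 - α₁ - α₂) * (2 - α₁ - α₂)))) := by
  have hγsq : (0:ℝ) ≤ γ^2 := sq_nonneg γ
  have hγ2 : (∫ p in (Set.Icc (0:ℝ) 1 ×ˢ Set.Icc (0:ℝ) 1) ×ˢ (Set.Icc (0:ℝ) 1 ×ˢ Set.Icc (0:ℝ) 1),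
      F p.1.1 p.1.2 * F p.2.1 p.2.2) = γ^2 := by
    have h := integral_prod_mul (μ := volume.restrict (Set.Icc (0:ℝ) 1 ×ˢ Set.Icc (0:ℝ) 1))
      (ν := volume.restrict (Set.Icc (0:ℝ) 1 ×ˢ Set.Icc (0:ℝ) 1))
      (fun p : ℝ×ℝ => F p.1 p.2) (fun p : ℝ×ℝ => F p.1 p.2)
    rw [Measure.prod_restrict] at h
    rw [MeasureTheory.Measure.volume_eq_prod, h, hγ]; ring
  have hFF : IntegrableOn (fun p : (ℝ × ℝ) × (ℝ × ℝ) => F p.1.1 p.1.2 * F p.2.1 p.2.2)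
      ((Set.Icc (0:ℝ) 1 ×ˢ Set.Icc (0:ℝ) 1) ×ˢ (Set.Icc (0:ℝ) 1 ×ˢ Set.Icc (0:ℝ) 1)) := by
    have h := Integrable.mul_prod (μ := volume.restrict (Set.Icc (0:ℝ) 1 ×ˢ Set.Icc (0:ℝ) 1))
      (ν := volume.restrict (Set.Icc (0:ℝ) 1 ×ˢ Set.Icc (0:ℝ) 1)) hγfin hγfin
    rw [Measure.prod_restrict] at h
    rw [IntegrableOn, MeasureTheory.Measure.volume_eq_prod]
    exact h
  have hd := fun (ℓ : ℤ) (hℓ : 2 ≤ |ℓ|) =>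
    aux_delta α₁ α₂ hα₁ hα₂ F hFpos γ hγ2 hFF Δ hΔfin hΔ ℓ hℓ
  have hnn : ∀ ℓ : ℤ, 0 ≤ Δ ℓ := by
    intro ℓ
    rw [hΔ ℓ]
    refine setIntegral_nonneg
      ((measurableSet_Icc.prod measurableSet_Icc).prod (measurableSet_Icc.prod measurableSet_Icc))
      ?_
    rintro ⟨⟨u, v⟩, ⟨u', v'⟩⟩ ⟨⟨hu, hv⟩, ⟨hu', hv'⟩⟩
    have hF1 := hFpos u v hu hv
    have hF2 := hFpos u' v' hu' hv'
    have h1 : (0:ℝ) ≤ |u - u' + ℓ| ^ (-α₁) := Real.rpow_nonneg (abs_nonneg _) _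
    have h2 : (0:ℝ) ≤ |v - v' + ℓ| ^ (-α₂) := Real.rpow_nonneg (abs_nonneg _) _
    positivity
  -- per-term bounds
  have hterm_ub : ∀ m : ℕ, ∀ j ∈ range m,
      (((m+1:ℕ):ℝ) - (((j:ℝ)+1)+1)) * (Δ (((j:ℤ)+1)+1) + Δ (-(((j:ℤ)+1)+1)))
        ≤ 2*γ^2 * ((((m+1:ℕ):ℝ) - ((j:ℝ)+1)) * (((j:ℝ)+1))^(-(α₁+α₂))) := by
    intro m j hj
    have hjm : j < m := mem_range.mp hj
    have hjr : (j:ℝ) + 1 ≤ m := by exact_mod_cast hjm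
    have hz2 : 2 ≤ |((j:ℤ)+1)+1| := by
      have h0 : (0:ℤ) ≤ (j:ℤ) := Int.natCast_nonneg _
      rw [abs_of_nonneg (by omega)]; omega
    have hb1 := (hd (((j:ℤ)+1)+1) hz2).2
    have hz2' : 2 ≤ |(-(((j:ℤ)+1)+1))| := by rwa [abs_neg]
    have hb2 := (hd (-(((j:ℤ)+1)+1)) hz2').2
    have habs : ((|((j:ℤ)+1)+1|:ℤ):ℝ) - 1 = (j:ℝ)+1 := by
      have h0 : (0:ℤ) ≤ (j:ℤ) := Int.natCast_nonneg _
      rw [abs_of_nonneg (by omega)]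
      push_cast; ring
    rw [habs] at hb1
    have habs2 : ((|(-(((j:ℤ)+1)+1))|:ℤ):ℝ) - 1 = (j:ℝ)+1 := by rw [abs_neg]; exact habs
    rw [habs2] at hb2
    have hrnn : (0:ℝ) ≤ (((j:ℝ)+1))^(-(α₁+α₂)) := Real.rpow_nonneg (by positivity) _
    have hc0 : (0:ℝ) ≤ ((m+1:ℕ):ℝ) - (((j:ℝ)+1)+1) := by push_cast; linarith
    have hc1 : ((m+1:ℕ):ℝ) - (((j:ℝ)+1)+1) ≤ ((m+1:ℕ):ℝ) - ((j:ℝ)+1) := by linarith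
    calc (((m+1:ℕ):ℝ) - (((j:ℝ)+1)+1)) * (Δ (((j:ℤ)+1)+1) + Δ (-(((j:ℤ)+1)+1)))
        ≤ (((m+1:ℕ):ℝ) - (((j:ℝ)+1)+1)) *
            ((((j:ℝ)+1))^(-(α₁+α₂)) * γ^2 + (((j:ℝ)+1))^(-(α₁+α₂)) * γ^2) :=
          mul_le_mul_of_nonneg_left (add_le_add hb1 hb2) hc0
      _ ≤ (((m+1:ℕ):ℝ) - ((j:ℝ)+1)) *
            ((((j:ℝ)+1))^(-(α₁+α₂)) * γ^2 + (((j:ℝ)+1))^(-(α₁+α₂)) * γ^2) :=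
          mul_le_mul_of_nonneg_right hc1
            (by have := mul_nonneg hrnn hγsq; linarith)
      _ = 2*γ^2 * ((((m+1:ℕ):ℝ) - ((j:ℝ)+1)) * (((j:ℝ)+1))^(-(α₁+α₂))) := by ring
  have hterm_lb : ∀ m : ℕ, ∀ j ∈ range m,
      2*γ^2 * ((((m+1:ℕ):ℝ) - (((j:ℝ)+1)+1)) * (((j:ℝ)+3))^(-(α₁+α₂)))
        ≤ (((m+1:ℕ):ℝ) - (((j:ℝ)+1)+1)) * (Δ (((j:ℤ)+1)+1) + Δ (-(((j:ℤ)+1)+1))) := by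
    intro m j hj
    have hjm : j < m := mem_range.mp hj
    have hjr : (j:ℝ) + 1 ≤ m := by exact_mod_cast hjm
    have hz2 : 2 ≤ |((j:ℤ)+1)+1| := by
      have h0 : (0:ℤ) ≤ (j:ℤ) := Int.natCast_nonneg _
      rw [abs_of_nonneg (by omega)]; omega
    have hb1 := (hd (((j:ℤ)+1)+1) hz2).1
    have hz2' : 2 ≤ |(-(((j:ℤ)+1)+1))| := by rwa [abs_neg]
    have hb2 := (hd (-(((j:ℤ)+1)+1)) hz2').1
    have habs : ((|((j:ℤ)+1)+1|:ℤ):ℝ) + 1 = (j:ℝ)+3 := by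
      have h0 : (0:ℤ) ≤ (j:ℤ) := Int.natCast_nonneg _
      rw [abs_of_nonneg (by omega)]
      push_cast; ring
    rw [habs] at hb1
    have habs2 : ((|(-(((j:ℤ)+1)+1))|:ℤ):ℝ) + 1 = (j:ℝ)+3 := by rw [abs_neg]; exact habs
    rw [habs2] at hb2
    have hc0 : (0:ℝ) ≤ ((m+1:ℕ):ℝ) - (((j:ℝ)+1)+1) := by push_cast; linarith
    calc 2*γ^2 * ((((m+1:ℕ):ℝ) - (((j:ℝ)+1)+1)) * (((j:ℝ)+3))^(-(α₁+α₂)))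
        = (((m+1:ℕ):ℝ) - (((j:ℝ)+1)+1)) *
            ((((j:ℝ)+3))^(-(α₁+α₂)) * γ^2 + (((j:ℝ)+3))^(-(α₁+α₂)) * γ^2) := by ring
      _ ≤ (((m+1:ℕ):ℝ) - (((j:ℝ)+1)+1)) * (Δ (((j:ℤ)+1)+1) + Δ (-(((j:ℤ)+1)+1))) :=
          mul_le_mul_of_nonneg_left (add_le_add hb1 hb2) hc0
  -- upper bound for the double sum
  have hub : ∀ m : ℕ, (∑ i ∈ range (m+1), ∑ j ∈ range (m+1), Δ ((i:ℤ) - (j:ℤ)))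
      ≤ ((m+1:ℕ):ℝ) * (Δ 0 + Δ 1 + Δ (-1)) + 2*γ^2 *
        (∑ k ∈ range (m+1), (((m+1:ℕ):ℝ) - ((k:ℝ)+1)) * (((k:ℝ)+1))^(-(α₁+α₂))) := by
    intro m
    rw [aux_reindex Δ (m+1)]
    have hpeel : (∑ k ∈ range (m+1), (((m+1:ℕ):ℝ) - ((k:ℝ)+1)) * (Δ ((k:ℤ)+1) + Δ (-((k:ℤ)+1))))
        = (∑ j ∈ range m, (((m+1:ℕ):ℝ) - (((j:ℝ)+1)+1)) * (Δ (((j:ℤ)+1)+1) + Δ (-(((j:ℤ)+1)+1))))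
          + (((m+1:ℕ):ℝ) - 1) * (Δ 1 + Δ (-1)) := by
      rw [Finset.sum_range_succ'
        (fun k => (((m+1:ℕ):ℝ) - ((k:ℝ)+1)) * (Δ ((k:ℤ)+1) + Δ (-((k:ℤ)+1)))) m]
      congr 1
      · refine Finset.sum_congr rfl fun j _ => ?_
        push_cast
        ring_nf
      · norm_num
    have hTsplit : (∑ k ∈ range (m+1), (((m+1:ℕ):ℝ) - ((k:ℝ)+1)) * (((k:ℝ)+1))^(-(α₁+α₂)))
        = ∑ j ∈ range m, (((m+1:ℕ):ℝ) - ((j:ℝ)+1)) * (((j:ℝ)+1))^(-(α₁+α₂)) := by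
      rw [Finset.sum_range_succ]
      have h : ((m+1:ℕ):ℝ) - ((m:ℝ)+1) = 0 := by push_cast; ring
      rw [h, zero_mul, add_zero]
    have hA : (∑ j ∈ range m, (((m+1:ℕ):ℝ) - (((j:ℝ)+1)+1)) * (Δ (((j:ℤ)+1)+1) + Δ (-(((j:ℤ)+1)+1))))
        ≤ 2*γ^2 * (∑ k ∈ range (m+1), (((m+1:ℕ):ℝ) - ((k:ℝ)+1)) * (((k:ℝ)+1))^(-(α₁+α₂))) := by
      rw [hTsplit, Finset.mul_sum]
      exact Finset.sum_le_sum (hterm_ub m)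
    have hB : (((m+1:ℕ):ℝ) - 1) * (Δ 1 + Δ (-1)) ≤ ((m+1:ℕ):ℝ) * (Δ 1 + Δ (-1)) :=
      mul_le_mul_of_nonneg_right (by linarith) (add_nonneg (hnn 1) (hnn (-1)))
    rw [hpeel]
    have hrw : ((m+1:ℕ):ℝ) * (Δ 0 + Δ 1 + Δ (-1))
        = ((m+1:ℕ):ℝ) * Δ 0 + ((m+1:ℕ):ℝ) * (Δ 1 + Δ (-1)) := by ring
    rw [hrw]
    linarith
  -- lower bound for the double sum
  have hlb : ∀ m : ℕ, 2*γ^2 *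
        (∑ k ∈ range (m+2), (((m+2:ℕ):ℝ) - ((k:ℝ)+1)) * (((k:ℝ)+1))^(-(α₁+α₂)))
        - 4*γ^2*((m+1:ℕ):ℝ)
      ≤ (∑ i ∈ range (m+1), ∑ j ∈ range (m+1), Δ ((i:ℤ) - (j:ℤ))) := by
    intro m
    rw [aux_reindex Δ (m+1)]
    have hpeel : (∑ k ∈ range (m+1), (((m+1:ℕ):ℝ) - ((k:ℝ)+1)) * (Δ ((k:ℤ)+1) + Δ (-((k:ℤ)+1))))
        = (∑ j ∈ range m, (((m+1:ℕ):ℝ) - (((j:ℝ)+1)+1)) * (Δ (((j:ℤ)+1)+1) + Δ (-(((j:ℤ)+1)+1))))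
          + (((m+1:ℕ):ℝ) - 1) * (Δ 1 + Δ (-1)) := by
      rw [Finset.sum_range_succ'
        (fun k => (((m+1:ℕ):ℝ) - ((k:ℝ)+1)) * (Δ ((k:ℤ)+1) + Δ (-((k:ℤ)+1)))) m]
      congr 1
      · refine Finset.sum_congr rfl fun j _ => ?_
        push_cast
        ring_nf
      · norm_num
    have hTsplit2 : (∑ k ∈ range (m+2), (((m+2:ℕ):ℝ) - ((k:ℝ)+1)) * (((k:ℝ)+1))^(-(α₁+α₂)))
        = (∑ j ∈ range m, (((m+2:ℕ):ℝ) - ((j:ℝ)+3)) * (((j:ℝ)+3))^(-(α₁+α₂)))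
          + (((m+2:ℕ):ℝ) - 2) * ((2:ℝ))^(-(α₁+α₂)) + (((m+2:ℕ):ℝ) - 1) := by
      rw [Finset.sum_range_succ'
        (fun k => (((m+2:ℕ):ℝ) - ((k:ℝ)+1)) * (((k:ℝ)+1))^(-(α₁+α₂))) (m+1)]
      rw [Finset.sum_range_succ'
        (fun k => (((m+2:ℕ):ℝ) - (((k+1:ℕ):ℝ)+1)) * ((((k+1:ℕ):ℝ)+1))^(-(α₁+α₂))) m]
      have h0 : (((m+2:ℕ):ℝ) - (((0:ℕ):ℝ)+1)) * ((((0:ℕ):ℝ)+1))^(-(α₁+α₂)) = ((m+2:ℕ):ℝ) - 1 := by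
        norm_num
      have h1 : (((m+2:ℕ):ℝ) - ((((0+1:ℕ)):ℝ)+1)) * (((((0+1:ℕ)):ℝ)+1))^(-(α₁+α₂))
          = (((m+2:ℕ):ℝ) - 2) * ((2:ℝ))^(-(α₁+α₂)) := by
        norm_num
      rw [h0, h1]
      congr 1
      congr 1
      refine Finset.sum_congr rfl fun j _ => ?_
      have hb : ((j+1+1:ℕ):ℝ)+1 = (j:ℝ)+3 := by push_cast; ring
      rw [hb]
    have hA : 2*γ^2 * (∑ j ∈ range m, (((m+2:ℕ):ℝ) - ((j:ℝ)+3)) * (((j:ℝ)+3))^(-(α₁+α₂)))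
        ≤ (∑ j ∈ range m, (((m+1:ℕ):ℝ) - (((j:ℝ)+1)+1)) * (Δ (((j:ℤ)+1)+1) + Δ (-(((j:ℤ)+1)+1)))) := by
      have hcoe : ∀ j : ℕ, ((m+2:ℕ):ℝ) - ((j:ℝ)+3) = ((m+1:ℕ):ℝ) - (((j:ℝ)+1)+1) := by
        intro j; push_cast; ring
      rw [Finset.mul_sum]
      refine Finset.sum_le_sum fun j hj => ?_
      rw [hcoe j]
      exact hterm_lb m j hj
    have h2a : ((2:ℝ))^(-(α₁+α₂)) ≤ 1 :=
      Real.rpow_le_one_of_one_le_of_nonpos (by norm_num)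
        (neg_nonpos.2 (add_nonneg hα₁ hα₂))
    have h2nn : (0:ℝ) ≤ ((2:ℝ))^(-(α₁+α₂)) := Real.rpow_nonneg (by norm_num) _
    have hm2 : ((m+2:ℕ):ℝ) - 2 = (m:ℝ) := by push_cast; ring
    have hg1 : (((m+2:ℕ):ℝ) - 2) * ((2:ℝ))^(-(α₁+α₂)) ≤ (m:ℝ)+1 := by
      rw [hm2]
      have := mul_le_mul_of_nonneg_left h2a (Nat.cast_nonneg m : (0:ℝ) ≤ m)
      linarith
    have hg0 : ((m+2:ℕ):ℝ) - 1 = (m:ℝ)+1 := by push_cast; ring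
    have htail : 2*γ^2 * ((((m+2:ℕ):ℝ) - 2) * ((2:ℝ))^(-(α₁+α₂)) + (((m+2:ℕ):ℝ) - 1))
        ≤ 4*γ^2*((m+1:ℕ):ℝ) := by
      have hs : (((m+2:ℕ):ℝ) - 2) * ((2:ℝ))^(-(α₁+α₂)) + (((m+2:ℕ):ℝ) - 1)
          ≤ 2*(((m+1:ℕ):ℝ)) := by
        rw [hg0]
        push_cast
        push_cast at hg1
        linarith
      have := mul_le_mul_of_nonneg_left hs (by positivity : (0:ℝ) ≤ 2*γ^2)
      linarith
    have hdrop1 : (0:ℝ) ≤ ((m+1:ℕ):ℝ) * Δ 0 := mul_nonneg (Nat.cast_nonneg _) (hnn 0)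
    have hdrop2 : (0:ℝ) ≤ (((m+1:ℕ):ℝ) - 1) * (Δ 1 + Δ (-1)) := by
      have h1 : (0:ℝ) ≤ ((m+1:ℕ):ℝ) - 1 := by push_cast; linarith [Nat.cast_nonneg (α := ℝ) m]
      exact mul_nonneg h1 (add_nonneg (hnn 1) (hnn (-1)))
    rw [hpeel, hTsplit2]
    have hexp : 2*γ^2 * ((∑ j ∈ range m, (((m+2:ℕ):ℝ) - ((j:ℝ)+3)) * (((j:ℝ)+3))^(-(α₁+α₂)))
          + (((m+2:ℕ):ℝ) - 2) * ((2:ℝ))^(-(α₁+α₂)) + (((m+2:ℕ):ℝ) - 1))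
        = 2*γ^2 * (∑ j ∈ range m, (((m+2:ℕ):ℝ) - ((j:ℝ)+3)) * (((j:ℝ)+3))^(-(α₁+α₂)))
          + 2*γ^2 * ((((m+2:ℕ):ℝ) - 2) * ((2:ℝ))^(-(α₁+α₂)) + (((m+2:ℕ):ℝ) - 1)) := by ring
    rw [hexp]
    linarith
  have hmain := aux_main (α₁+α₂) (γ^2) (Δ 0 + Δ 1 + Δ (-1)) (add_nonneg hα₁ hα₂) hsum hγsq
    (fun n : ℕ => ∑ k ∈ range n, ((n:ℝ) - ((k:ℝ)+1)) * (((k:ℝ)+1))^(-(α₁+α₂)))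
    (fun N : ℕ => ∑ i ∈ range N, ∑ j ∈ range N, Δ ((i:ℤ) - (j:ℤ)))
    (aux_T (α₁+α₂) (add_nonneg hα₁ hα₂) hsum) hub hlb
  have heq : 2*γ^2/((1-(α₁+α₂))*(2-(α₁+α₂))) = 2 * γ ^ 2 / ((1 - α₁ - α₂) * (2 - α₁ - α₂)) := by
    ring_nf
  exact heq ▸ hmain
end

section
/- Let α1, α2, α3, α4 ∈ (0,1) with α1 + α2 + α3 + α4 < 3. Then the integral ∫_{[0,1]^4} |u1-u2|^{-α1} |u2-u3|^{-α2} |u3-u4|^{-α3} |u4-u1|^{-α4} du1 du2 du3 du4 is finite. -/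
open MeasureTheory Set
open scoped ENNReal

lemma aux_meas (c : ℝ) (hc : c ≠ 0) : Measurable fun x : ℝ => |x| ^ c := by
  have h : (fun x : ℝ => |x| ^ c) = fun x => if x = 0 then 0 else Real.exp (Real.log |x| * c) := by
    funext x
    rcases eq_or_ne x 0 with h | h
    · simp [h, Real.zero_rpow hc]
    · rw [if_neg h, Real.rpow_def_of_pos (abs_pos.mpr h)]
  rw [h]
  exact Measurable.ite (measurableSet_eq) measurable_const
    (((Real.measurable_log.comp measurable_abs).mul_const c).exp)

noncomputable abbrev μ0 : Measure ℝ := volume.restrict (Set.Icc (0:ℝ) 1)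

noncomputable def Kk (b : ℝ) : ℝ≥0∞ := ∫⁻ t in Set.Icc (-1:ℝ) 1, ENNReal.ofReal (|t| ^ (-b))

lemma Kk_lt_top {b : ℝ} (hb0 : 0 < b) (hb1 : b < 1) : Kk b < ⊤ := by
  have hpos : (∫⁻ t in Set.Icc (0:ℝ) 1, ENNReal.ofReal (|t| ^ (-b))) < ⊤ := by
    have hint : IntegrableOn (fun t : ℝ => |t| ^ (-b)) (Set.Icc (0:ℝ) 1) := by
      rw [integrableOn_Icc_iff_integrableOn_Ioo]
      have h2 : IntegrableOn (fun t : ℝ => t ^ (-b)) (Set.Ioo (0:ℝ) 1) :=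
        (intervalIntegral.integrableOn_Ioo_rpow_iff one_pos).2 (by linarith)
      exact h2.congr_fun (fun t ht => by rw [abs_of_pos ht.1]) measurableSet_Ioo
    exact hint.lintegral_lt_top
  have hneg : (∫⁻ t in Set.Icc (-1:ℝ) 0, ENNReal.ofReal (|t| ^ (-b)))
      = ∫⁻ t in Set.Icc (0:ℝ) 1, ENNReal.ofReal (|t| ^ (-b)) := by
    have h := (Measure.measurePreserving_neg (volume : Measure ℝ)).setLIntegral_comp_emb
      measurableEmbedding_neg (fun t => ENNReal.ofReal (|t| ^ (-b))) (Set.Icc (0:ℝ) 1)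
    have himg : (Neg.neg '' Set.Icc (0:ℝ) 1) = Set.Icc (-1:ℝ) 0 := by
      rw [Set.image_neg_Icc]; norm_num
    rw [himg] at h
    rw [← h]
    exact lintegral_congr fun t => by rw [abs_neg]
  have hsub : Set.Icc (-1:ℝ) 1 ⊆ Set.Icc (-1:ℝ) 0 ∪ Set.Icc 0 1 := by
    intro t ht
    rcases le_total t 0 with h | h
    · exact Or.inl ⟨ht.1, h⟩
    · exact Or.inr ⟨h, ht.2⟩
  calc Kk b ≤ ∫⁻ t in (Set.Icc (-1:ℝ) 0 ∪ Set.Icc 0 1), ENNReal.ofReal (|t| ^ (-b)) :=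
        lintegral_mono_set hsub
    _ ≤ (∫⁻ t in Set.Icc (-1:ℝ) 0, ENNReal.ofReal (|t| ^ (-b)))
        + ∫⁻ t in Set.Icc (0:ℝ) 1, ENNReal.ofReal (|t| ^ (-b)) := lintegral_union_le _ _ _
    _ < ⊤ := by rw [hneg]; exact ENNReal.add_lt_top.2 ⟨hpos, hpos⟩

lemma step {b x : ℝ} (hx : x ∈ Set.Icc (0:ℝ) 1) :
    ∫⁻ y in Set.Icc (0:ℝ) 1, ENNReal.ofReal (|y - x| ^ (-b)) ≤ Kk b := by
  have h := (measurePreserving_add_right (volume : Measure ℝ) (-x)).setLIntegral_comp_emb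
    (measurableEmbedding_addRight (-x)) (fun t => ENNReal.ofReal (|t| ^ (-b))) (Set.Icc (0:ℝ) 1)
  have himg : ((fun y : ℝ => y + -x) '' Set.Icc (0:ℝ) 1) = Set.Icc (-x) (1 - x) := by
    rw [Set.image_add_const_Icc, zero_add, ← sub_eq_add_neg]
  calc ∫⁻ y in Set.Icc (0:ℝ) 1, ENNReal.ofReal (|y - x| ^ (-b))
      = ∫⁻ y in Set.Icc (0:ℝ) 1, ENNReal.ofReal (|y + -x| ^ (-b)) := by
        simp only [sub_eq_add_neg]
    _ = ∫⁻ t in Set.Icc (-x) (1 - x), ENNReal.ofReal (|t| ^ (-b)) := by rw [h, himg]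
    _ ≤ Kk b := lintegral_mono_set (Set.Icc_subset_Icc (by linarith [hx.2]) (by linarith [hx.1]))

lemma step' {b x : ℝ} (hx : x ∈ Set.Icc (0:ℝ) 1) :
    ∫⁻ y in Set.Icc (0:ℝ) 1, ENNReal.ofReal (|x - y| ^ (-b)) ≤ Kk b := by
  simp only [abs_sub_comm x]
  exact step hx

lemma int_le {g : ℝ → ℝ≥0∞} {C : ℝ≥0∞}
    (h : ∀ x ∈ Set.Icc (0:ℝ) 1, g x ≤ C) :
    ∫⁻ x in Set.Icc (0:ℝ) 1, g x ≤ C := by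
  calc ∫⁻ x in Set.Icc (0:ℝ) 1, g x ≤ ∫⁻ _ in Set.Icc (0:ℝ) 1, C :=
        lintegral_mono_ae ((ae_restrict_mem measurableSet_Icc).mono h)
    _ = C * volume (Set.Icc (0:ℝ) 1) := setLIntegral_const _ _
    _ = C := by simp [Real.volume_Icc]






lemma rev3 (f : ℝ → ℝ → ℝ → ℝ≥0∞)
    (hf : Measurable fun p : ℝ × ℝ × ℝ => f p.1 p.2.1 p.2.2) :
    ∫⁻ a, ∫⁻ b, ∫⁻ c, f a b c ∂μ0 ∂μ0 ∂μ0 = ∫⁻ c, ∫⁻ b, ∫⁻ a, f a b c ∂μ0 ∂μ0 ∂μ0 := by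
  have m3 : ∀ a b : ℝ, Measurable (f a b) :=
    fun a b => hf.comp (measurable_const.prodMk (measurable_const.prodMk measurable_id))
  have swap1 : (∫⁻ a, ∫⁻ b, (∫⁻ c, f a b c ∂μ0) ∂μ0 ∂μ0)
      = ∫⁻ b, ∫⁻ a, (∫⁻ c, f a b c ∂μ0) ∂μ0 ∂μ0 := by
    refine lintegral_lintegral_swap ?_
    refine (Measurable.lintegral_prod_right ?_).aemeasurable
    exact hf.comp ((measurable_fst.fst).prodMk ((measurable_fst.snd).prodMk measurable_snd))
  have swap2 : ∀ b : ℝ, (∫⁻ a, ∫⁻ c, f a b c ∂μ0 ∂μ0) = ∫⁻ c, ∫⁻ a, f a b c ∂μ0 ∂μ0 := by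
    intro b
    refine lintegral_lintegral_swap ?_
    exact (hf.comp ((measurable_fst).prodMk (measurable_const.prodMk measurable_snd))).aemeasurable
  have swap3 : (∫⁻ b, ∫⁻ c, (∫⁻ a, f a b c ∂μ0) ∂μ0 ∂μ0)
      = ∫⁻ c, ∫⁻ b, (∫⁻ a, f a b c ∂μ0) ∂μ0 ∂μ0 := by
    refine lintegral_lintegral_swap ?_
    refine (Measurable.lintegral_prod_right ?_).aemeasurable
    exact hf.comp (measurable_snd.prodMk ((measurable_fst.fst).prodMk (measurable_fst.snd)))
  rw [swap1]
  rw [lintegral_congr swap2, swap3]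

lemma tonelli4 (f : ℝ × ℝ × ℝ × ℝ → ℝ≥0∞) (hf : Measurable f) :
    ∫⁻ p, f p ∂(μ0.prod (μ0.prod (μ0.prod μ0)))
      = ∫⁻ a, ∫⁻ b, ∫⁻ c, ∫⁻ d, f (a, (b, (c, d))) ∂μ0 ∂μ0 ∂μ0 ∂μ0 := by
  rw [lintegral_prod _ hf.aemeasurable]
  refine lintegral_congr fun a => ?_
  have h1 : Measurable fun y : ℝ × ℝ × ℝ => f (a, y) := hf.comp measurable_prodMk_left
  rw [lintegral_prod _ h1.aemeasurable]
  refine lintegral_congr fun b => ?_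
  have h2 : Measurable fun y : ℝ × ℝ => f (a, b, y) := h1.comp measurable_prodMk_left
  rw [lintegral_prod _ h2.aemeasurable]

lemma restrict4 :
    (volume : Measure (ℝ × ℝ × ℝ × ℝ)).restrict
      (Set.Icc (0:ℝ) 1 ×ˢ (Set.Icc (0:ℝ) 1 ×ˢ (Set.Icc (0:ℝ) 1 ×ˢ Set.Icc (0:ℝ) 1)))
      = μ0.prod (μ0.prod (μ0.prod μ0)) := by
  have h2 : μ0.prod μ0 = (volume : Measure (ℝ × ℝ)).restrict (Set.Icc (0:ℝ) 1 ×ˢ Set.Icc (0:ℝ) 1) := by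
    rw [μ0, Measure.prod_restrict, ← Measure.volume_eq_prod]
  have h3 : μ0.prod (μ0.prod μ0)
      = (volume : Measure (ℝ × ℝ × ℝ)).restrict
        (Set.Icc (0:ℝ) 1 ×ˢ (Set.Icc (0:ℝ) 1 ×ˢ Set.Icc (0:ℝ) 1)) := by
    rw [h2, μ0, Measure.prod_restrict, ← Measure.volume_eq_prod]
  rw [h3, μ0, Measure.prod_restrict, ← Measure.volume_eq_prod]


lemma pointwise_bound {x y z w : ℝ} (hx : 0 ≤ x) (hy : 0 ≤ y) (hz : 0 ≤ z) (hw : 0 ≤ w)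
    {a₁ a₂ a₃ a₄ l₁ l₂ l₃ l₄ b₁ b₂ b₃ b₄ : ℝ}
    (hl₁ : 0 < l₁) (hl₂ : 0 < l₂) (hl₃ : 0 < l₃) (hl₄ : 0 < l₄)
    (hlsum : l₁ + l₂ + l₃ + l₄ = 1)
    (hb₁ : 0 < b₁) (hb₂ : 0 < b₂) (hb₃ : 0 < b₃) (hb₄ : 0 < b₄)
    (ha₁ : a₁ = b₁ * (l₂ + l₃ + l₄)) (ha₂ : a₂ = b₂ * (l₁ + l₃ + l₄))
    (ha₃ : a₃ = b₃ * (l₁ + l₂ + l₄)) (ha₄ : a₄ = b₄ * (l₁ + l₂ + l₃)) :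
    x ^ (-a₁) * y ^ (-a₂) * z ^ (-a₃) * w ^ (-a₄) ≤
      y ^ (-b₂) * z ^ (-b₃) * w ^ (-b₄) + x ^ (-b₁) * z ^ (-b₃) * w ^ (-b₄)
        + x ^ (-b₁) * y ^ (-b₂) * w ^ (-b₄) + x ^ (-b₁) * y ^ (-b₂) * z ^ (-b₃) := by
  have ha₁0 : a₁ ≠ 0 := by nlinarith
  have ha₂0 : a₂ ≠ 0 := by nlinarith
  have ha₃0 : a₃ ≠ 0 := by nlinarith
  have ha₄0 : a₄ ≠ 0 := by nlinarith
  have hR : 0 ≤ y ^ (-b₂) * z ^ (-b₃) * w ^ (-b₄) + x ^ (-b₁) * z ^ (-b₃) * w ^ (-b₄)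
      + x ^ (-b₁) * y ^ (-b₂) * w ^ (-b₄) + x ^ (-b₁) * y ^ (-b₂) * z ^ (-b₃) := by
    have := Real.rpow_nonneg hx (-b₁); have := Real.rpow_nonneg hy (-b₂)
    have := Real.rpow_nonneg hz (-b₃); have := Real.rpow_nonneg hw (-b₄)
    positivity
  rcases eq_or_lt_of_le hx with hx0 | hx0
  · have h0 : x ^ (-a₁) = 0 := by rw [← hx0, Real.zero_rpow (neg_ne_zero.mpr ha₁0)]
    rw [h0, zero_mul, zero_mul, zero_mul]; exact hR
  rcases eq_or_lt_of_le hy with hy0 | hy0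
  · have h0 : y ^ (-a₂) = 0 := by rw [← hy0, Real.zero_rpow (neg_ne_zero.mpr ha₂0)]
    rw [h0, mul_zero, zero_mul, zero_mul]; exact hR
  rcases eq_or_lt_of_le hz with hz0 | hz0
  · have h0 : z ^ (-a₃) = 0 := by rw [← hz0, Real.zero_rpow (neg_ne_zero.mpr ha₃0)]
    rw [h0, mul_zero, zero_mul]; exact hR
  rcases eq_or_lt_of_le hw with hw0 | hw0
  · have h0 : w ^ (-a₄) = 0 := by rw [← hw0, Real.zero_rpow (neg_ne_zero.mpr ha₄0)]
    rw [h0, mul_zero]; exact hR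
  -- positive case
  set p₁ := y ^ (-b₂) * z ^ (-b₃) * w ^ (-b₄) with hp₁
  set p₂ := x ^ (-b₁) * z ^ (-b₃) * w ^ (-b₄) with hp₂
  set p₃ := x ^ (-b₁) * y ^ (-b₂) * w ^ (-b₄) with hp₃
  set p₄ := x ^ (-b₁) * y ^ (-b₂) * z ^ (-b₃) with hp₄
  have hp₁n : 0 ≤ p₁ := by rw [hp₁]; positivity
  have hp₂n : 0 ≤ p₂ := by rw [hp₂]; positivity
  have hp₃n : 0 ≤ p₃ := by rw [hp₃]; positivity
  have hp₄n : 0 ≤ p₄ := by rw [hp₄]; positivity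
  have hexp : ∀ t c : ℝ, Real.exp t ^ c = Real.exp (t * c) := fun t c => by
    rw [Real.rpow_def_of_pos (Real.exp_pos t), Real.log_exp]
  have key : x ^ (-a₁) * y ^ (-a₂) * z ^ (-a₃) * w ^ (-a₄)
      = p₁ ^ l₁ * p₂ ^ l₂ * p₃ ^ l₃ * p₄ ^ l₄ := by
    rw [hp₁, hp₂, hp₃, hp₄]
    simp only [Real.rpow_def_of_pos hx0, Real.rpow_def_of_pos hy0,
      Real.rpow_def_of_pos hz0, Real.rpow_def_of_pos hw0, ← Real.exp_add, hexp]
    rw [Real.exp_eq_exp]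
    linear_combination (-Real.log x) * ha₁ + (-Real.log y) * ha₂
      + (-Real.log z) * ha₃ + (-Real.log w) * ha₄
  rw [key]
  calc p₁ ^ l₁ * p₂ ^ l₂ * p₃ ^ l₃ * p₄ ^ l₄
      ≤ l₁ * p₁ + l₂ * p₂ + l₃ * p₃ + l₄ * p₄ :=
        Real.geom_mean_le_arith_mean4_weighted hl₁.le hl₂.le hl₃.le hl₄.le
          hp₁n hp₂n hp₃n hp₄n hlsum
    _ ≤ p₁ + p₂ + p₃ + p₄ := by
        have h1 : l₁ * p₁ ≤ 1 * p₁ := mul_le_mul_of_nonneg_right (by linarith) hp₁n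
        have h2 : l₂ * p₂ ≤ 1 * p₂ := mul_le_mul_of_nonneg_right (by linarith) hp₂n
        have h3 : l₃ * p₃ ≤ 1 * p₃ := mul_le_mul_of_nonneg_right (by linarith) hp₃n
        have h4 : l₄ * p₄ ≤ 1 * p₄ := mul_le_mul_of_nonneg_right (by linarith) hp₄n
        linarith





lemma bnd_T3 {b₁ b₂ b₄ : ℝ} (h₂ : 0 < b₂) (h₂' : b₂ < 1) (h₄ : 0 < b₄) (h₄' : b₄ < 1) :
    (∫⁻ u1, ∫⁻ u2, ∫⁻ u3, ∫⁻ u4,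
      ENNReal.ofReal (|u1 - u2| ^ (-b₁)) * ENNReal.ofReal (|u2 - u3| ^ (-b₂))
        * ENNReal.ofReal (|u4 - u1| ^ (-b₄)) ∂μ0 ∂μ0 ∂μ0 ∂μ0)
      ≤ Kk b₁ * (Kk b₂ * Kk b₄) := by
  refine int_le fun u1 hu1 => ?_
  have inner2 : ∀ u2 ∈ Set.Icc (0:ℝ) 1,
      (∫⁻ u3, ∫⁻ u4, ENNReal.ofReal (|u1 - u2| ^ (-b₁)) * ENNReal.ofReal (|u2 - u3| ^ (-b₂))
        * ENNReal.ofReal (|u4 - u1| ^ (-b₄)) ∂μ0 ∂μ0)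
      ≤ ENNReal.ofReal (|u1 - u2| ^ (-b₁)) * (Kk b₂ * Kk b₄) := by
    intro u2 hu2
    calc (∫⁻ u3, ∫⁻ u4, ENNReal.ofReal (|u1 - u2| ^ (-b₁)) * ENNReal.ofReal (|u2 - u3| ^ (-b₂))
          * ENNReal.ofReal (|u4 - u1| ^ (-b₄)) ∂μ0 ∂μ0)
        = ∫⁻ u3, (ENNReal.ofReal (|u1 - u2| ^ (-b₁)) * ENNReal.ofReal (|u2 - u3| ^ (-b₂)))
            * ∫⁻ u4, ENNReal.ofReal (|u4 - u1| ^ (-b₄)) ∂μ0 ∂μ0 :=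
          lintegral_congr fun u3 => lintegral_const_mul' _ _
            (ENNReal.mul_ne_top ENNReal.ofReal_ne_top ENNReal.ofReal_ne_top)
      _ ≤ ∫⁻ u3, (ENNReal.ofReal (|u1 - u2| ^ (-b₁)) * ENNReal.ofReal (|u2 - u3| ^ (-b₂)))
            * Kk b₄ ∂μ0 :=
          lintegral_mono fun u3 => mul_le_mul_right (step hu1) _
      _ = ∫⁻ u3, ENNReal.ofReal (|u1 - u2| ^ (-b₁))
            * (ENNReal.ofReal (|u2 - u3| ^ (-b₂)) * Kk b₄) ∂μ0 := by simp only [mul_assoc]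
      _ = ENNReal.ofReal (|u1 - u2| ^ (-b₁))
            * ∫⁻ u3, ENNReal.ofReal (|u2 - u3| ^ (-b₂)) * Kk b₄ ∂μ0 :=
          lintegral_const_mul' _ _ ENNReal.ofReal_ne_top
      _ = ENNReal.ofReal (|u1 - u2| ^ (-b₁))
            * ((∫⁻ u3, ENNReal.ofReal (|u2 - u3| ^ (-b₂)) ∂μ0) * Kk b₄) := by
          rw [lintegral_mul_const' _ _ (Kk_lt_top h₄ h₄').ne]
      _ ≤ ENNReal.ofReal (|u1 - u2| ^ (-b₁)) * (Kk b₂ * Kk b₄) :=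
          mul_le_mul_right (mul_le_mul_left (step' hu2) _) _
  calc (∫⁻ u2, ∫⁻ u3, ∫⁻ u4, ENNReal.ofReal (|u1 - u2| ^ (-b₁))
        * ENNReal.ofReal (|u2 - u3| ^ (-b₂)) * ENNReal.ofReal (|u4 - u1| ^ (-b₄)) ∂μ0 ∂μ0 ∂μ0)
      ≤ ∫⁻ u2, ENNReal.ofReal (|u1 - u2| ^ (-b₁)) * (Kk b₂ * Kk b₄) ∂μ0 :=
        lintegral_mono_ae ((ae_restrict_mem measurableSet_Icc).mono inner2)
    _ = (∫⁻ u2, ENNReal.ofReal (|u1 - u2| ^ (-b₁)) ∂μ0) * (Kk b₂ * Kk b₄) :=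
        lintegral_mul_const' _ _ (ENNReal.mul_ne_top (Kk_lt_top h₂ h₂').ne (Kk_lt_top h₄ h₄').ne)
    _ ≤ Kk b₁ * (Kk b₂ * Kk b₄) := mul_le_mul_left (step' hu1) _

lemma bnd_T1 {b₂ b₃ b₄ : ℝ} (h₂ : 0 < b₂) (h₃ : 0 < b₃) (h₃' : b₃ < 1)
    (h₄ : 0 < b₄) (h₂' : b₂ < 1) :
    (∫⁻ u1, ∫⁻ u2, ∫⁻ u3, ∫⁻ u4,
      ENNReal.ofReal (|u4 - u1| ^ (-b₄)) * ENNReal.ofReal (|u3 - u4| ^ (-b₃))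
        * ENNReal.ofReal (|u2 - u3| ^ (-b₂)) ∂μ0 ∂μ0 ∂μ0 ∂μ0)
      ≤ Kk b₄ * (Kk b₃ * Kk b₂) := by
  refine int_le fun u1 hu1 => ?_
  have hrev := rev3 (fun u2 u3 u4 => ENNReal.ofReal (|u4 - u1| ^ (-b₄))
      * ENNReal.ofReal (|u3 - u4| ^ (-b₃)) * ENNReal.ofReal (|u2 - u3| ^ (-b₂)))
    (((ENNReal.measurable_ofReal.comp ((aux_meas _ (neg_ne_zero.mpr h₄.ne')).comp
        (measurable_snd.snd.sub measurable_const))).mul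
      (ENNReal.measurable_ofReal.comp ((aux_meas _ (neg_ne_zero.mpr h₃.ne')).comp
        (measurable_snd.fst.sub measurable_snd.snd)))).mul
      (ENNReal.measurable_ofReal.comp ((aux_meas _ (neg_ne_zero.mpr h₂.ne')).comp
        (measurable_fst.sub measurable_snd.fst))))
  rw [hrev]
  have inner2 : ∀ u4 ∈ Set.Icc (0:ℝ) 1,
      (∫⁻ u3, ∫⁻ u2, ENNReal.ofReal (|u4 - u1| ^ (-b₄)) * ENNReal.ofReal (|u3 - u4| ^ (-b₃))
        * ENNReal.ofReal (|u2 - u3| ^ (-b₂)) ∂μ0 ∂μ0)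
      ≤ ENNReal.ofReal (|u4 - u1| ^ (-b₄)) * (Kk b₃ * Kk b₂) := by
    intro u4 hu4
    calc (∫⁻ u3, ∫⁻ u2, ENNReal.ofReal (|u4 - u1| ^ (-b₄)) * ENNReal.ofReal (|u3 - u4| ^ (-b₃))
          * ENNReal.ofReal (|u2 - u3| ^ (-b₂)) ∂μ0 ∂μ0)
        = ∫⁻ u3, (ENNReal.ofReal (|u4 - u1| ^ (-b₄)) * ENNReal.ofReal (|u3 - u4| ^ (-b₃)))
            * ∫⁻ u2, ENNReal.ofReal (|u2 - u3| ^ (-b₂)) ∂μ0 ∂μ0 :=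
          lintegral_congr fun u3 => lintegral_const_mul' _ _
            (ENNReal.mul_ne_top ENNReal.ofReal_ne_top ENNReal.ofReal_ne_top)
      _ ≤ ∫⁻ u3, (ENNReal.ofReal (|u4 - u1| ^ (-b₄)) * ENNReal.ofReal (|u3 - u4| ^ (-b₃)))
            * Kk b₂ ∂μ0 :=
          lintegral_mono_ae ((ae_restrict_mem measurableSet_Icc).mono fun u3 hu3 =>
            mul_le_mul_right (step hu3) _)
      _ = ∫⁻ u3, ENNReal.ofReal (|u4 - u1| ^ (-b₄))
            * (ENNReal.ofReal (|u3 - u4| ^ (-b₃)) * Kk b₂) ∂μ0 := by simp only [mul_assoc]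
      _ = ENNReal.ofReal (|u4 - u1| ^ (-b₄))
            * ∫⁻ u3, ENNReal.ofReal (|u3 - u4| ^ (-b₃)) * Kk b₂ ∂μ0 :=
          lintegral_const_mul' _ _ ENNReal.ofReal_ne_top
      _ = ENNReal.ofReal (|u4 - u1| ^ (-b₄))
            * ((∫⁻ u3, ENNReal.ofReal (|u3 - u4| ^ (-b₃)) ∂μ0) * Kk b₂) := by
          rw [lintegral_mul_const' _ _ (Kk_lt_top h₂ h₂').ne]
      _ ≤ ENNReal.ofReal (|u4 - u1| ^ (-b₄)) * (Kk b₃ * Kk b₂) :=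
          mul_le_mul_right (mul_le_mul_left (step hu4) _) _
  calc (∫⁻ u4, ∫⁻ u3, ∫⁻ u2, ENNReal.ofReal (|u4 - u1| ^ (-b₄))
        * ENNReal.ofReal (|u3 - u4| ^ (-b₃)) * ENNReal.ofReal (|u2 - u3| ^ (-b₂)) ∂μ0 ∂μ0 ∂μ0)
      ≤ ∫⁻ u4, ENNReal.ofReal (|u4 - u1| ^ (-b₄)) * (Kk b₃ * Kk b₂) ∂μ0 :=
        lintegral_mono_ae ((ae_restrict_mem measurableSet_Icc).mono inner2)
    _ = (∫⁻ u4, ENNReal.ofReal (|u4 - u1| ^ (-b₄)) ∂μ0) * (Kk b₃ * Kk b₂) :=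
        lintegral_mul_const' _ _ (ENNReal.mul_ne_top (Kk_lt_top h₃ h₃').ne (Kk_lt_top h₂ h₂').ne)
    _ ≤ Kk b₄ * (Kk b₃ * Kk b₂) := mul_le_mul_left (step hu1) _

lemma bnd_T2 {b₁ b₃ b₄ : ℝ} (h₁ : 0 < b₁) (h₁' : b₁ < 1) (h₃ : 0 < b₃) (h₃' : b₃ < 1)
    (h₄ : 0 < b₄) :
    (∫⁻ u1, ∫⁻ u2, ∫⁻ u3, ∫⁻ u4,
      ENNReal.ofReal (|u4 - u1| ^ (-b₄)) * ENNReal.ofReal (|u3 - u4| ^ (-b₃))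
        * ENNReal.ofReal (|u1 - u2| ^ (-b₁)) ∂μ0 ∂μ0 ∂μ0 ∂μ0)
      ≤ Kk b₄ * (Kk b₃ * Kk b₁) := by
  refine int_le fun u1 hu1 => ?_
  have hrev := rev3 (fun u2 u3 u4 => ENNReal.ofReal (|u4 - u1| ^ (-b₄))
      * ENNReal.ofReal (|u3 - u4| ^ (-b₃)) * ENNReal.ofReal (|u1 - u2| ^ (-b₁)))
    (((ENNReal.measurable_ofReal.comp ((aux_meas _ (neg_ne_zero.mpr h₄.ne')).comp
        (measurable_snd.snd.sub measurable_const))).mul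
      (ENNReal.measurable_ofReal.comp ((aux_meas _ (neg_ne_zero.mpr h₃.ne')).comp
        (measurable_snd.fst.sub measurable_snd.snd)))).mul
      (ENNReal.measurable_ofReal.comp ((aux_meas _ (neg_ne_zero.mpr h₁.ne')).comp
        (measurable_const.sub measurable_fst))))
  rw [hrev]
  have inner2 : ∀ u4 ∈ Set.Icc (0:ℝ) 1,
      (∫⁻ u3, ∫⁻ u2, ENNReal.ofReal (|u4 - u1| ^ (-b₄)) * ENNReal.ofReal (|u3 - u4| ^ (-b₃))
        * ENNReal.ofReal (|u1 - u2| ^ (-b₁)) ∂μ0 ∂μ0)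
      ≤ ENNReal.ofReal (|u4 - u1| ^ (-b₄)) * (Kk b₃ * Kk b₁) := by
    intro u4 hu4
    calc (∫⁻ u3, ∫⁻ u2, ENNReal.ofReal (|u4 - u1| ^ (-b₄)) * ENNReal.ofReal (|u3 - u4| ^ (-b₃))
          * ENNReal.ofReal (|u1 - u2| ^ (-b₁)) ∂μ0 ∂μ0)
        = ∫⁻ u3, (ENNReal.ofReal (|u4 - u1| ^ (-b₄)) * ENNReal.ofReal (|u3 - u4| ^ (-b₃)))
            * ∫⁻ u2, ENNReal.ofReal (|u1 - u2| ^ (-b₁)) ∂μ0 ∂μ0 :=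
          lintegral_congr fun u3 => lintegral_const_mul' _ _
            (ENNReal.mul_ne_top ENNReal.ofReal_ne_top ENNReal.ofReal_ne_top)
      _ ≤ ∫⁻ u3, (ENNReal.ofReal (|u4 - u1| ^ (-b₄)) * ENNReal.ofReal (|u3 - u4| ^ (-b₃)))
            * Kk b₁ ∂μ0 :=
          lintegral_mono fun u3 => mul_le_mul_right (step' hu1) _
      _ = ∫⁻ u3, ENNReal.ofReal (|u4 - u1| ^ (-b₄))
            * (ENNReal.ofReal (|u3 - u4| ^ (-b₃)) * Kk b₁) ∂μ0 := by simp only [mul_assoc]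
      _ = ENNReal.ofReal (|u4 - u1| ^ (-b₄))
            * ∫⁻ u3, ENNReal.ofReal (|u3 - u4| ^ (-b₃)) * Kk b₁ ∂μ0 :=
          lintegral_const_mul' _ _ ENNReal.ofReal_ne_top
      _ = ENNReal.ofReal (|u4 - u1| ^ (-b₄))
            * ((∫⁻ u3, ENNReal.ofReal (|u3 - u4| ^ (-b₃)) ∂μ0) * Kk b₁) := by
          rw [lintegral_mul_const' _ _ (Kk_lt_top h₁ h₁').ne]
      _ ≤ ENNReal.ofReal (|u4 - u1| ^ (-b₄)) * (Kk b₃ * Kk b₁) :=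
          mul_le_mul_right (mul_le_mul_left (step hu4) _) _
  calc (∫⁻ u4, ∫⁻ u3, ∫⁻ u2, ENNReal.ofReal (|u4 - u1| ^ (-b₄))
        * ENNReal.ofReal (|u3 - u4| ^ (-b₃)) * ENNReal.ofReal (|u1 - u2| ^ (-b₁)) ∂μ0 ∂μ0 ∂μ0)
      ≤ ∫⁻ u4, ENNReal.ofReal (|u4 - u1| ^ (-b₄)) * (Kk b₃ * Kk b₁) ∂μ0 :=
        lintegral_mono_ae ((ae_restrict_mem measurableSet_Icc).mono inner2)
    _ = (∫⁻ u4, ENNReal.ofReal (|u4 - u1| ^ (-b₄)) ∂μ0) * (Kk b₃ * Kk b₁) :=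
        lintegral_mul_const' _ _ (ENNReal.mul_ne_top (Kk_lt_top h₃ h₃').ne (Kk_lt_top h₁ h₁').ne)
    _ ≤ Kk b₄ * (Kk b₃ * Kk b₁) := mul_le_mul_left (step hu1) _







lemma bnd_T4 {b₁ b₂ b₃ : ℝ} (h₁ : 0 < b₁) (h₂ : 0 < b₂) (h₂' : b₂ < 1) (h₃ : 0 < b₃) (h₃' : b₃ < 1) :
    (∫⁻ u1, ∫⁻ u2, ∫⁻ u3, ∫⁻ u4,
      ENNReal.ofReal (|u1 - u2| ^ (-b₁)) * ENNReal.ofReal (|u2 - u3| ^ (-b₂))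
        * ENNReal.ofReal (|u3 - u4| ^ (-b₃)) ∂μ0 ∂μ0 ∂μ0 ∂μ0)
      ≤ Kk b₁ * (Kk b₂ * Kk b₃) := by
  refine int_le fun u1 hu1 => ?_
  have inner2 : ∀ u2 ∈ Set.Icc (0:ℝ) 1,
      (∫⁻ u3, ∫⁻ u4, ENNReal.ofReal (|u1 - u2| ^ (-b₁)) * ENNReal.ofReal (|u2 - u3| ^ (-b₂))
        * ENNReal.ofReal (|u3 - u4| ^ (-b₃)) ∂μ0 ∂μ0)
      ≤ ENNReal.ofReal (|u1 - u2| ^ (-b₁)) * (Kk b₂ * Kk b₃) := by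
    intro u2 hu2
    calc (∫⁻ u3, ∫⁻ u4, ENNReal.ofReal (|u1 - u2| ^ (-b₁)) * ENNReal.ofReal (|u2 - u3| ^ (-b₂))
          * ENNReal.ofReal (|u3 - u4| ^ (-b₃)) ∂μ0 ∂μ0)
        = ∫⁻ u3, (ENNReal.ofReal (|u1 - u2| ^ (-b₁)) * ENNReal.ofReal (|u2 - u3| ^ (-b₂)))
            * ∫⁻ u4, ENNReal.ofReal (|u3 - u4| ^ (-b₃)) ∂μ0 ∂μ0 :=
          lintegral_congr fun u3 => lintegral_const_mul' _ _
            (ENNReal.mul_ne_top ENNReal.ofReal_ne_top ENNReal.ofReal_ne_top)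
      _ ≤ ∫⁻ u3, (ENNReal.ofReal (|u1 - u2| ^ (-b₁)) * ENNReal.ofReal (|u2 - u3| ^ (-b₂)))
            * Kk b₃ ∂μ0 :=
          lintegral_mono_ae ((ae_restrict_mem measurableSet_Icc).mono fun u3 hu3 =>
            mul_le_mul_right (step' hu3) _)
      _ = ∫⁻ u3, ENNReal.ofReal (|u1 - u2| ^ (-b₁))
            * (ENNReal.ofReal (|u2 - u3| ^ (-b₂)) * Kk b₃) ∂μ0 := by simp only [mul_assoc]
      _ = ENNReal.ofReal (|u1 - u2| ^ (-b₁))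
            * ∫⁻ u3, ENNReal.ofReal (|u2 - u3| ^ (-b₂)) * Kk b₃ ∂μ0 :=
          lintegral_const_mul' _ _ ENNReal.ofReal_ne_top
      _ = ENNReal.ofReal (|u1 - u2| ^ (-b₁))
            * ((∫⁻ u3, ENNReal.ofReal (|u2 - u3| ^ (-b₂)) ∂μ0) * Kk b₃) := by
          rw [lintegral_mul_const' _ _ (Kk_lt_top h₃ h₃').ne]
      _ ≤ ENNReal.ofReal (|u1 - u2| ^ (-b₁)) * (Kk b₂ * Kk b₃) :=
          mul_le_mul_right (mul_le_mul_left (step' hu2) _) _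
  calc (∫⁻ u2, ∫⁻ u3, ∫⁻ u4, ENNReal.ofReal (|u1 - u2| ^ (-b₁))
        * ENNReal.ofReal (|u2 - u3| ^ (-b₂)) * ENNReal.ofReal (|u3 - u4| ^ (-b₃)) ∂μ0 ∂μ0 ∂μ0)
      ≤ ∫⁻ u2, ENNReal.ofReal (|u1 - u2| ^ (-b₁)) * (Kk b₂ * Kk b₃) ∂μ0 :=
        lintegral_mono_ae ((ae_restrict_mem measurableSet_Icc).mono inner2)
    _ = (∫⁻ u2, ENNReal.ofReal (|u1 - u2| ^ (-b₁)) ∂μ0) * (Kk b₂ * Kk b₃) :=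
        lintegral_mul_const' _ _ (ENNReal.mul_ne_top (Kk_lt_top h₂ h₂').ne (Kk_lt_top h₃ h₃').ne)
    _ ≤ Kk b₁ * (Kk b₂ * Kk b₃) := mul_le_mul_left (step' hu1) _





theorem stmt_9 (α₁ α₂ α₃ α₄ : ℝ) (h₁ : α₁ ∈ Set.Ioo (0:ℝ) 1) (h₂ : α₂ ∈ Set.Ioo (0:ℝ) 1)
    (h₃ : α₃ ∈ Set.Ioo (0:ℝ) 1) (h₄ : α₄ ∈ Set.Ioo (0:ℝ) 1)
    (hsum : α₁ + α₂ + α₃ + α₄ < 3) :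
    (∫⁻ p in Set.Icc (0:ℝ) 1 ×ˢ (Set.Icc (0:ℝ) 1 ×ˢ (Set.Icc (0:ℝ) 1 ×ˢ Set.Icc (0:ℝ) 1)),
        ENNReal.ofReal (|p.1 - p.2.1| ^ (-α₁) * |p.2.1 - p.2.2.1| ^ (-α₂) *
          |p.2.2.1 - p.2.2.2| ^ (-α₃) * |p.2.2.2 - p.1| ^ (-α₄))) < ⊤ := by
  obtain ⟨ha1, hc1⟩ := h₁; obtain ⟨ha2, hc2⟩ := h₂; obtain ⟨ha3, hc3⟩ := h₃; obtain ⟨ha4, hc4⟩ := h₄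
  set s : ℝ := 4 - (α₁ + α₂ + α₃ + α₄) with hsdef
  have hs1 : 1 < s := by rw [hsdef]; linarith
  have hspos : 0 < s := by linarith
  set l₁ : ℝ := (1 - α₁) / s with hl1def
  set l₂ : ℝ := (1 - α₂) / s with hl2def
  set l₃ : ℝ := (1 - α₃) / s with hl3def
  set l₄ : ℝ := (1 - α₄) / s with hl4def
  have hl1pos : 0 < l₁ := div_pos (by linarith) hspos
  have hl2pos : 0 < l₂ := div_pos (by linarith) hspos
  have hl3pos : 0 < l₃ := div_pos (by linarith) hspos
  have hl4pos : 0 < l₄ := div_pos (by linarith) hspos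
  have hlsum : l₁ + l₂ + l₃ + l₄ = 1 := by
    rw [hl1def, hl2def, hl3def, hl4def, ← add_div, ← add_div, ← add_div,
      div_eq_one_iff_eq hspos.ne']
    rw [hsdef]; ring
  have h1l1 : 0 < 1 - l₁ := by linarith
  have h1l2 : 0 < 1 - l₂ := by linarith
  have h1l3 : 0 < 1 - l₃ := by linarith
  have h1l4 : 0 < 1 - l₄ := by linarith
  have hl1lt : l₁ < 1 - α₁ := by rw [hl1def]; exact div_lt_self (by linarith) hs1
  have hl2lt : l₂ < 1 - α₂ := by rw [hl2def]; exact div_lt_self (by linarith) hs1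
  have hl3lt : l₃ < 1 - α₃ := by rw [hl3def]; exact div_lt_self (by linarith) hs1
  have hl4lt : l₄ < 1 - α₄ := by rw [hl4def]; exact div_lt_self (by linarith) hs1
  set b₁ : ℝ := α₁ / (1 - l₁) with hb1def
  set b₂ : ℝ := α₂ / (1 - l₂) with hb2def
  set b₃ : ℝ := α₃ / (1 - l₃) with hb3def
  set b₄ : ℝ := α₄ / (1 - l₄) with hb4def
  have hb1pos : 0 < b₁ := div_pos ha1 h1l1
  have hb2pos : 0 < b₂ := div_pos ha2 h1l2
  have hb3pos : 0 < b₃ := div_pos ha3 h1l3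
  have hb4pos : 0 < b₄ := div_pos ha4 h1l4
  have hb1lt : b₁ < 1 := (div_lt_one h1l1).mpr (by linarith)
  have hb2lt : b₂ < 1 := (div_lt_one h1l2).mpr (by linarith)
  have hb3lt : b₃ < 1 := (div_lt_one h1l3).mpr (by linarith)
  have hb4lt : b₄ < 1 := (div_lt_one h1l4).mpr (by linarith)
  have hab1 : α₁ = b₁ * (l₂ + l₃ + l₄) := by
    have h : l₂ + l₃ + l₄ = 1 - l₁ := by linarith
    rw [h, hb1def, div_mul_cancel₀ _ h1l1.ne']
  have hab2 : α₂ = b₂ * (l₁ + l₃ + l₄) := by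
    have h : l₁ + l₃ + l₄ = 1 - l₂ := by linarith
    rw [h, hb2def, div_mul_cancel₀ _ h1l2.ne']
  have hab3 : α₃ = b₃ * (l₁ + l₂ + l₄) := by
    have h : l₁ + l₂ + l₄ = 1 - l₃ := by linarith
    rw [h, hb3def, div_mul_cancel₀ _ h1l3.ne']
  have hab4 : α₄ = b₄ * (l₁ + l₂ + l₃) := by
    have h : l₁ + l₂ + l₃ = 1 - l₄ := by linarith
    rw [h, hb4def, div_mul_cancel₀ _ h1l4.ne']
  -- measurability of the four bound terms
  have mx : Measurable fun p : ℝ × ℝ × ℝ × ℝ => ENNReal.ofReal (|p.1 - p.2.1| ^ (-b₁)) :=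
    ENNReal.measurable_ofReal.comp ((aux_meas _ (neg_ne_zero.mpr hb1pos.ne')).comp
      (measurable_fst.sub measurable_snd.fst))
  have my : Measurable fun p : ℝ × ℝ × ℝ × ℝ => ENNReal.ofReal (|p.2.1 - p.2.2.1| ^ (-b₂)) :=
    ENNReal.measurable_ofReal.comp ((aux_meas _ (neg_ne_zero.mpr hb2pos.ne')).comp
      (measurable_snd.fst.sub measurable_snd.snd.fst))
  have mz : Measurable fun p : ℝ × ℝ × ℝ × ℝ => ENNReal.ofReal (|p.2.2.1 - p.2.2.2| ^ (-b₃)) :=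
    ENNReal.measurable_ofReal.comp ((aux_meas _ (neg_ne_zero.mpr hb3pos.ne')).comp
      (measurable_snd.snd.fst.sub measurable_snd.snd.snd))
  have mw : Measurable fun p : ℝ × ℝ × ℝ × ℝ => ENNReal.ofReal (|p.2.2.2 - p.1| ^ (-b₄)) :=
    ENNReal.measurable_ofReal.comp ((aux_meas _ (neg_ne_zero.mpr hb4pos.ne')).comp
      (measurable_snd.snd.snd.sub measurable_fst))
  have Kne : ∀ {b : ℝ}, 0 < b → b < 1 → Kk b ≠ ⊤ := fun hb hb' => (Kk_lt_top hb hb').ne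
  -- pointwise bound
  have hpt : ∀ p : ℝ × ℝ × ℝ × ℝ,
      ENNReal.ofReal (|p.1 - p.2.1| ^ (-α₁) * |p.2.1 - p.2.2.1| ^ (-α₂) *
          |p.2.2.1 - p.2.2.2| ^ (-α₃) * |p.2.2.2 - p.1| ^ (-α₄))
        ≤ (ENNReal.ofReal (|p.2.2.2 - p.1| ^ (-b₄)) * ENNReal.ofReal (|p.2.2.1 - p.2.2.2| ^ (-b₃))
              * ENNReal.ofReal (|p.2.1 - p.2.2.1| ^ (-b₂))
            + ENNReal.ofReal (|p.2.2.2 - p.1| ^ (-b₄)) * ENNReal.ofReal (|p.2.2.1 - p.2.2.2| ^ (-b₃))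
              * ENNReal.ofReal (|p.1 - p.2.1| ^ (-b₁)))
          + ENNReal.ofReal (|p.1 - p.2.1| ^ (-b₁)) * ENNReal.ofReal (|p.2.1 - p.2.2.1| ^ (-b₂))
              * ENNReal.ofReal (|p.2.2.2 - p.1| ^ (-b₄))
          + ENNReal.ofReal (|p.1 - p.2.1| ^ (-b₁)) * ENNReal.ofReal (|p.2.1 - p.2.2.1| ^ (-b₂))
              * ENNReal.ofReal (|p.2.2.1 - p.2.2.2| ^ (-b₃)) := by
    intro p
    have h := pointwise_bound (abs_nonneg (p.1 - p.2.1)) (abs_nonneg (p.2.1 - p.2.2.1))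
      (abs_nonneg (p.2.2.1 - p.2.2.2)) (abs_nonneg (p.2.2.2 - p.1))
      hl1pos hl2pos hl3pos hl4pos hlsum hb1pos hb2pos hb3pos hb4pos hab1 hab2 hab3 hab4
    refine le_trans (ENNReal.ofReal_le_ofReal h) ?_
    have trip : ∀ u v t : ℝ, 0 ≤ u → 0 ≤ v →
        ENNReal.ofReal (u * v * t) = ENNReal.ofReal u * ENNReal.ofReal v * ENNReal.ofReal t :=
      fun u v t hu hv => by rw [ENNReal.ofReal_mul (mul_nonneg hu hv), ENNReal.ofReal_mul hu]
    have n1 : (0:ℝ) ≤ |p.1 - p.2.1| ^ (-b₁) := Real.rpow_nonneg (abs_nonneg _) _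
    have n2 : (0:ℝ) ≤ |p.2.1 - p.2.2.1| ^ (-b₂) := Real.rpow_nonneg (abs_nonneg _) _
    have n3 : (0:ℝ) ≤ |p.2.2.1 - p.2.2.2| ^ (-b₃) := Real.rpow_nonneg (abs_nonneg _) _
    calc ENNReal.ofReal (_ + _ + _ + _)
        ≤ ENNReal.ofReal (_ + _ + _) + ENNReal.ofReal _ := ENNReal.ofReal_add_le
      _ ≤ ENNReal.ofReal (_ + _) + ENNReal.ofReal _ + ENNReal.ofReal _ :=
          add_le_add_left ENNReal.ofReal_add_le _
      _ ≤ ENNReal.ofReal _ + ENNReal.ofReal _ + ENNReal.ofReal _ + ENNReal.ofReal _ :=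
          add_le_add_left (add_le_add_left ENNReal.ofReal_add_le _) _
      _ = _ := by rw [trip _ _ _ n2 n3, trip _ _ _ n1 n3, trip _ _ _ n1 n2, trip _ _ _ n1 n2]; ring
  -- main estimate
  calc (∫⁻ p in Set.Icc (0:ℝ) 1 ×ˢ (Set.Icc (0:ℝ) 1 ×ˢ (Set.Icc (0:ℝ) 1 ×ˢ Set.Icc (0:ℝ) 1)),
        ENNReal.ofReal (|p.1 - p.2.1| ^ (-α₁) * |p.2.1 - p.2.2.1| ^ (-α₂) *
          |p.2.2.1 - p.2.2.2| ^ (-α₃) * |p.2.2.2 - p.1| ^ (-α₄)))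
      ≤ ∫⁻ p in Set.Icc (0:ℝ) 1 ×ˢ (Set.Icc (0:ℝ) 1 ×ˢ (Set.Icc (0:ℝ) 1 ×ˢ Set.Icc (0:ℝ) 1)),
        ((ENNReal.ofReal (|p.2.2.2 - p.1| ^ (-b₄)) * ENNReal.ofReal (|p.2.2.1 - p.2.2.2| ^ (-b₃))
              * ENNReal.ofReal (|p.2.1 - p.2.2.1| ^ (-b₂))
            + ENNReal.ofReal (|p.2.2.2 - p.1| ^ (-b₄)) * ENNReal.ofReal (|p.2.2.1 - p.2.2.2| ^ (-b₃))
              * ENNReal.ofReal (|p.1 - p.2.1| ^ (-b₁)))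
          + ENNReal.ofReal (|p.1 - p.2.1| ^ (-b₁)) * ENNReal.ofReal (|p.2.1 - p.2.2.1| ^ (-b₂))
              * ENNReal.ofReal (|p.2.2.2 - p.1| ^ (-b₄))
          + ENNReal.ofReal (|p.1 - p.2.1| ^ (-b₁)) * ENNReal.ofReal (|p.2.1 - p.2.2.1| ^ (-b₂))
              * ENNReal.ofReal (|p.2.2.1 - p.2.2.2| ^ (-b₃))) := lintegral_mono hpt
    _ < ⊤ := by
      rw [lintegral_add_left (((mw.fun_mul mz).fun_mul my).fun_add ((mw.fun_mul mz).fun_mul mx) |>.fun_add ((mx.fun_mul my).fun_mul mw)),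
        lintegral_add_left (((mw.fun_mul mz).fun_mul my).fun_add ((mw.fun_mul mz).fun_mul mx)),
        lintegral_add_left ((mw.fun_mul mz).fun_mul my)]
      have hT1 : (∫⁻ p in Set.Icc (0:ℝ) 1 ×ˢ (Set.Icc (0:ℝ) 1 ×ˢ (Set.Icc (0:ℝ) 1 ×ˢ Set.Icc (0:ℝ) 1)),
          ENNReal.ofReal (|p.2.2.2 - p.1| ^ (-b₄)) * ENNReal.ofReal (|p.2.2.1 - p.2.2.2| ^ (-b₃))
            * ENNReal.ofReal (|p.2.1 - p.2.2.1| ^ (-b₂))) < ⊤ := by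
        rw [restrict4, tonelli4 _ ((mw.fun_mul mz).fun_mul my)]
        exact lt_of_le_of_lt (bnd_T1 hb2pos hb3pos hb3lt hb4pos hb2lt)
          (ENNReal.mul_lt_top (Kk_lt_top hb4pos hb4lt)
            (ENNReal.mul_lt_top (Kk_lt_top hb3pos hb3lt) (Kk_lt_top hb2pos hb2lt)))
      have hT2 : (∫⁻ p in Set.Icc (0:ℝ) 1 ×ˢ (Set.Icc (0:ℝ) 1 ×ˢ (Set.Icc (0:ℝ) 1 ×ˢ Set.Icc (0:ℝ) 1)),
          ENNReal.ofReal (|p.2.2.2 - p.1| ^ (-b₄)) * ENNReal.ofReal (|p.2.2.1 - p.2.2.2| ^ (-b₃))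
            * ENNReal.ofReal (|p.1 - p.2.1| ^ (-b₁))) < ⊤ := by
        rw [restrict4, tonelli4 _ ((mw.fun_mul mz).fun_mul mx)]
        exact lt_of_le_of_lt (bnd_T2 hb1pos hb1lt hb3pos hb3lt hb4pos)
          (ENNReal.mul_lt_top (Kk_lt_top hb4pos hb4lt)
            (ENNReal.mul_lt_top (Kk_lt_top hb3pos hb3lt) (Kk_lt_top hb1pos hb1lt)))
      have hT3 : (∫⁻ p in Set.Icc (0:ℝ) 1 ×ˢ (Set.Icc (0:ℝ) 1 ×ˢ (Set.Icc (0:ℝ) 1 ×ˢ Set.Icc (0:ℝ) 1)),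
          ENNReal.ofReal (|p.1 - p.2.1| ^ (-b₁)) * ENNReal.ofReal (|p.2.1 - p.2.2.1| ^ (-b₂))
            * ENNReal.ofReal (|p.2.2.2 - p.1| ^ (-b₄))) < ⊤ := by
        rw [restrict4, tonelli4 _ ((mx.fun_mul my).fun_mul mw)]
        exact lt_of_le_of_lt (bnd_T3 hb2pos hb2lt hb4pos hb4lt)
          (ENNReal.mul_lt_top (Kk_lt_top hb1pos hb1lt)
            (ENNReal.mul_lt_top (Kk_lt_top hb2pos hb2lt) (Kk_lt_top hb4pos hb4lt)))
      have hT4 : (∫⁻ p in Set.Icc (0:ℝ) 1 ×ˢ (Set.Icc (0:ℝ) 1 ×ˢ (Set.Icc (0:ℝ) 1 ×ˢ Set.Icc (0:ℝ) 1)),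
          ENNReal.ofReal (|p.1 - p.2.1| ^ (-b₁)) * ENNReal.ofReal (|p.2.1 - p.2.2.1| ^ (-b₂))
            * ENNReal.ofReal (|p.2.2.1 - p.2.2.2| ^ (-b₃))) < ⊤ := by
        rw [restrict4, tonelli4 _ ((mx.fun_mul my).fun_mul mz)]
        exact lt_of_le_of_lt (bnd_T4 hb1pos hb2pos hb2lt hb3pos hb3lt)
          (ENNReal.mul_lt_top (Kk_lt_top hb1pos hb1lt)
            (ENNReal.mul_lt_top (Kk_lt_top hb2pos hb2lt) (Kk_lt_top hb3pos hb3lt)))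
      exact ENNReal.add_lt_top.2 ⟨ENNReal.add_lt_top.2 ⟨ENNReal.add_lt_top.2 ⟨hT1, hT2⟩, hT3⟩, hT4⟩
end

section
/- Let α1, α2, α3, α4 ∈ (0,1) and let ε ∈ {-1, 1}. Then the integral ∫_{[0,1]^4} |u1-u2+ε|^{-α1} |u2-u3+ε|^{-α2} |u3-u4|^{-α3} |u4-u1|^{-α4} du1 du2 du3 du4 is finite. -/
open MeasureTheory Set Real

lemma ennrpow_anti {x y : ENNReal} (hxy : x ≤ y) {α : ℝ} (hα : 0 < α) :
    y ^ (-α) ≤ x ^ (-α) := by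
  rw [ENNReal.rpow_neg, ENNReal.rpow_neg]
  exact ENNReal.inv_le_inv.2 (ENNReal.rpow_le_rpow hxy hα.le)

lemma ae_ne_pt (a : ℝ) : ∀ᵐ x : ℝ, x ≠ a := by
  refine ae_iff.2 ?_
  have : {x : ℝ | ¬ x ≠ a} = {a} := by ext x; simp
  rw [this]
  exact measure_singleton a

lemma key_piece {α : ℝ} (h0 : 0 < α) (h1 : α < 1) {a b : ℝ} (hab : a ≤ b) (hb : b - a ≤ 1) :
    ∫⁻ x in Icc a b, (ENNReal.ofReal |x - a|) ^ (-α) ≤ ENNReal.ofReal (1/(1-α)) := by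
  have hexp : (-1:ℝ) < -α := by linarith
  have h' : IntervalIntegrable (fun x : ℝ => (x - a) ^ (-α)) volume a b := by
    simpa using (intervalIntegral.intervalIntegrable_rpow' (a := 0) (b := b - a) hexp).comp_sub_right a
  have hII : IntervalIntegrable (fun x : ℝ => |x - a| ^ (-α)) volume a b := by
    apply h'.congr
    intro x hx; beta_reduce
    rw [uIoc_of_le hab] at hx
    rw [abs_of_nonneg (by linarith [hx.1] : (0:ℝ) ≤ x - a)]
  have hInt : IntegrableOn (fun x : ℝ => |x - a| ^ (-α)) (Icc a b) :=
    (intervalIntegrable_iff_integrableOn_Icc_of_le hab).1 hII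
  have h_eq : ∫⁻ x in Icc a b, (ENNReal.ofReal |x - a|) ^ (-α)
      = ∫⁻ x in Icc a b, ENNReal.ofReal (|x - a| ^ (-α)) := by
    apply lintegral_congr_ae
    filter_upwards [ae_restrict_of_ae (ae_ne_pt a)] with x hx
    exact ENNReal.ofReal_rpow_of_pos (abs_pos.2 (sub_ne_zero.2 hx))
  rw [h_eq, ← ofReal_integral_eq_lintegral_ofReal hInt
    (ae_of_all _ fun x => rpow_nonneg (abs_nonneg _) _)]
  apply ENNReal.ofReal_le_ofReal
  have e1 : ∫ x in Icc a b, |x - a| ^ (-α) = ∫ x in a..b, |x - a| ^ (-α) := by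
    rw [intervalIntegral.integral_of_le hab, integral_Icc_eq_integral_Ioc]
  have e2 : ∫ x in a..b, |x - a| ^ (-α) = ∫ x in a..b, (x - a) ^ (-α) := by
    apply intervalIntegral.integral_congr
    intro x hx
    rw [uIcc_of_le hab] at hx
    simp only []
    rw [abs_of_nonneg (by linarith [hx.1] : (0:ℝ) ≤ x - a)]
  have e3 := intervalIntegral.integral_comp_sub_right (a := a) (b := b) (fun y : ℝ => y ^ (-α)) a
  rw [e1, e2, e3, sub_self,
    integral_rpow (Or.inl hexp), Real.zero_rpow (by linarith : -α + 1 ≠ 0), sub_zero,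
    show -α + 1 = 1 - α from by ring]
  have h2 : (0:ℝ) < 1 - α := by linarith
  rw [div_le_div_iff₀ h2 h2, one_mul]
  have : (b - a) ^ (1 - α) ≤ 1 :=
    Real.rpow_le_one (by linarith) hb (by linarith)
  nlinarith [this]

lemma key_piece' {α : ℝ} (h1 : α < 1) {a b : ℝ} (hab : a ≤ b) (hb : b - a ≤ 1) :
    ∫⁻ x in Icc a b, (ENNReal.ofReal |x - b|) ^ (-α) ≤ ENNReal.ofReal (1/(1-α)) := by
  have hexp : (-1:ℝ) < -α := by linarith
  have h' : IntervalIntegrable (fun x : ℝ => (b - x) ^ (-α)) volume a b := by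
    have := (intervalIntegral.intervalIntegrable_rpow' (a := 0) (b := b - a)
      hexp).comp_sub_left b
    simpa using this.symm
  have hII : IntervalIntegrable (fun x : ℝ => |x - b| ^ (-α)) volume a b := by
    apply h'.congr
    intro x hx; beta_reduce
    rw [uIoc_of_le hab] at hx
    rw [abs_of_nonpos (by linarith [hx.2] : x - b ≤ 0), neg_sub]
  have hInt : IntegrableOn (fun x : ℝ => |x - b| ^ (-α)) (Icc a b) :=
    (intervalIntegrable_iff_integrableOn_Icc_of_le hab).1 hII
  have h_eq : ∫⁻ x in Icc a b, (ENNReal.ofReal |x - b|) ^ (-α)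
      = ∫⁻ x in Icc a b, ENNReal.ofReal (|x - b| ^ (-α)) := by
    apply lintegral_congr_ae
    filter_upwards [ae_restrict_of_ae (ae_ne_pt b)] with x hx
    exact ENNReal.ofReal_rpow_of_pos (abs_pos.2 (sub_ne_zero.2 hx))
  rw [h_eq, ← ofReal_integral_eq_lintegral_ofReal hInt
    (ae_of_all _ fun x => rpow_nonneg (abs_nonneg _) _)]
  apply ENNReal.ofReal_le_ofReal
  have e1 : ∫ x in Icc a b, |x - b| ^ (-α) = ∫ x in a..b, |x - b| ^ (-α) := by
    rw [intervalIntegral.integral_of_le hab, integral_Icc_eq_integral_Ioc]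
  have e2 : ∫ x in a..b, |x - b| ^ (-α) = ∫ x in a..b, (b - x) ^ (-α) := by
    apply intervalIntegral.integral_congr
    intro x hx
    rw [uIcc_of_le hab] at hx
    simp only []
    rw [abs_of_nonpos (by linarith [hx.2] : x - b ≤ 0), neg_sub]
  have e3 := intervalIntegral.integral_comp_sub_left (a := a) (b := b) (fun y : ℝ => y ^ (-α)) b
  rw [e1, e2, e3, sub_self,
    integral_rpow (Or.inl hexp), Real.zero_rpow (by linarith : -α + 1 ≠ 0), sub_zero,
    show -α + 1 = 1 - α from by ring]
  have h2 : (0:ℝ) < 1 - α := by linarith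
  rw [div_le_div_iff₀ h2 h2, one_mul]
  have : (b - a) ^ (1 - α) ≤ 1 :=
    Real.rpow_le_one (by linarith) hb (by linarith)
  nlinarith [this]

lemma meas_aux (c α : ℝ) : Measurable fun x : ℝ => (ENNReal.ofReal |x - c|) ^ (-α) := by
  fun_prop

lemma key1 {α : ℝ} (h0 : 0 < α) (h1 : α < 1) (c : ℝ) :
    ∫⁻ x in Icc (0:ℝ) 1, (ENNReal.ofReal |x - c|) ^ (-α) ≤ ENNReal.ofReal (2/(1-α)) := by
  set c' := max 0 (min c 1) with hc'
  have hc'0 : 0 ≤ c' := le_max_left _ _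
  have hc'1 : c' ≤ 1 := max_le zero_le_one (min_le_right _ _)
  have hmono : ∀ x ∈ Icc (0:ℝ) 1,
      (ENNReal.ofReal |x - c|) ^ (-α) ≤ (ENNReal.ofReal |x - c'|) ^ (-α) := by
    intro x hx
    apply ennrpow_anti (ENNReal.ofReal_le_ofReal ?_) h0
    rcases le_or_gt c 0 with h | h
    · have : c' = 0 := by
        rw [hc', min_eq_left (by linarith), max_eq_left h]
      rw [this]
      rw [abs_of_nonneg (by linarith [hx.1]), abs_of_nonneg (by linarith [hx.1]), sub_zero]
      linarith [hx.1]
    · rcases le_or_gt 1 c with h2 | h2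
      · have : c' = 1 := by
          rw [hc', min_eq_right h2, max_eq_right zero_le_one]
        rw [this]
        rw [abs_of_nonpos (by linarith [hx.2]), abs_of_nonpos (by linarith [hx.2])]
        linarith [hx.2]
      · have : c' = c := by
          rw [hc', min_eq_left h2.le, max_eq_right h.le]
        rw [this]
  calc ∫⁻ x in Icc (0:ℝ) 1, (ENNReal.ofReal |x - c|) ^ (-α)
      ≤ ∫⁻ x in Icc (0:ℝ) 1, (ENNReal.ofReal |x - c'|) ^ (-α) :=
        setLIntegral_mono (meas_aux c' α) hmono
    _ ≤ ∫⁻ x in Icc (0:ℝ) c' ∪ Icc c' 1, (ENNReal.ofReal |x - c'|) ^ (-α) := by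
        apply lintegral_mono_set
        intro x hx
        rcases le_total x c' with h | h
        · exact Or.inl ⟨hx.1, h⟩
        · exact Or.inr ⟨h, hx.2⟩
    _ ≤ (∫⁻ x in Icc (0:ℝ) c', (ENNReal.ofReal |x - c'|) ^ (-α))
        + ∫⁻ x in Icc c' 1, (ENNReal.ofReal |x - c'|) ^ (-α) := lintegral_union_le _ _ _
    _ ≤ ENNReal.ofReal (1/(1-α)) + ENNReal.ofReal (1/(1-α)) := by
        gcongr
        · exact key_piece' h1 hc'0 (by linarith)
        · exact key_piece h0 h1 hc'1 (by linarith)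
    _ = ENNReal.ofReal (2/(1-α)) := by
        have h2 : (0:ℝ) < 1 - α := by linarith
        rw [← ENNReal.ofReal_add (by positivity) (by positivity)]
        ring_nf

lemma small1 {α : ℝ} (hα : 0 < α) (x : ℝ) :
    ENNReal.ofReal (|x| ^ (-α)) ≤ (ENNReal.ofReal |x|) ^ (-α) := by
  rcases (abs_nonneg x).lt_or_eq with h | h
  · exact le_of_eq (ENNReal.ofReal_rpow_of_pos h).symm
  · rw [← h, Real.zero_rpow (by linarith : -α ≠ 0)]
    simp

lemma two_rpow_le {α : ℝ} (h1 : α ≤ 1) : (2 : ENNReal) ^ α ≤ 2 := by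
  calc (2:ENNReal) ^ α ≤ (2:ENNReal) ^ (1:ℝ) :=
        ENNReal.rpow_le_rpow_of_exponent_le (by norm_num) h1
    _ = 2 := ENNReal.rpow_one 2

lemma small2 {α : ℝ} (h0 : 0 < α) (h1 : α ≤ 1) {s : ℝ} (hs : 1/2 ≤ s) :
    (ENNReal.ofReal s) ^ (-α) ≤ 2 := by
  calc (ENNReal.ofReal s) ^ (-α) ≤ (ENNReal.ofReal (1/2)) ^ (-α) :=
        ennrpow_anti (ENNReal.ofReal_le_ofReal hs) h0
    _ = ((2 : ENNReal)⁻¹) ^ (-α) := by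
        rw [show (1:ℝ)/2 = 2⁻¹ by norm_num, ENNReal.ofReal_inv_of_pos (by norm_num),
          ENNReal.ofReal_ofNat]
    _ = (2 : ENNReal) ^ α := by
        rw [ENNReal.inv_rpow, ENNReal.rpow_neg, inv_inv]
    _ ≤ 2 := two_rpow_le h1

lemma half {α : ℝ} (h0 : 0 < α) (h1 : α ≤ 1) (t : ℝ) :
    (ENNReal.ofReal (t/2)) ^ (-α) ≤ 2 * (ENNReal.ofReal t) ^ (-α) := by
  rcases le_or_gt t 0 with h | h
  · rw [ENNReal.ofReal_eq_zero.2 h, ENNReal.zero_rpow_of_neg (by linarith),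
      ENNReal.mul_top (by norm_num)]
    exact le_top
  · have h2 : ENNReal.ofReal (t/2) = ENNReal.ofReal t / 2 := by
      rw [ENNReal.ofReal_div_of_pos (by norm_num), ENNReal.ofReal_ofNat]
    rw [h2, ENNReal.rpow_neg, ENNReal.div_rpow_of_nonneg _ _ h0.le,
      ENNReal.inv_div (Or.inl (ENNReal.rpow_ne_top_of_nonneg h0.le (by norm_num)))
        (Or.inl (ENNReal.rpow_pos (by norm_num) (by norm_num)).ne'),
      div_eq_mul_inv, ← ENNReal.rpow_neg]
    exact mul_le_mul_left (two_rpow_le h1) _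

noncomputable def Afun (α₁ α₂ : ℝ) (y : ℝ) : ENNReal :=
  2 * ((ENNReal.ofReal |y - 0|) ^ (-α₁) + (ENNReal.ofReal |y - 1|) ^ (-α₁)
    + (ENNReal.ofReal |y - 0|) ^ (-α₂) + (ENNReal.ofReal |y - 1|) ^ (-α₂))

@[fun_prop]
lemma Afun_meas (α₁ α₂ : ℝ) : Measurable (Afun α₁ α₂) := by
  unfold Afun; fun_prop

lemma Afun_int {α₁ α₂ : ℝ} (h10 : 0 < α₁) (h11 : α₁ < 1) (h20 : 0 < α₂) (h21 : α₂ < 1) :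
    ∫⁻ y in Icc (0:ℝ) 1, Afun α₁ α₂ y
      ≤ 2 * (ENNReal.ofReal (2/(1-α₁)) + ENNReal.ofReal (2/(1-α₁))
          + ENNReal.ofReal (2/(1-α₂)) + ENNReal.ofReal (2/(1-α₂))) := by
  unfold Afun
  rw [lintegral_const_mul 2 (by fun_prop)]
  refine mul_le_mul_right ?_ 2
  rw [lintegral_add_left (by fun_prop), lintegral_add_left (by fun_prop),
    lintegral_add_left (by fun_prop)]
  gcongr
  · exact key1 h10 h11 0
  · exact key1 h10 h11 1
  · exact key1 h20 h21 0
  · exact key1 h20 h21 1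

lemma Afun_ptbound {α₁ α₂ : ℝ} (h10 : 0 < α₁) (h11 : α₁ < 1) (h20 : 0 < α₂) (h21 : α₂ < 1)
    {y : ℝ} (hy : y ∈ Icc (0:ℝ) 1) {c c' : ℝ}
    (hcc : (c = 0 ∧ c' = 1) ∨ (c = 1 ∧ c' = 0)) :
    (ENNReal.ofReal |y - c|) ^ (-α₁) * (ENNReal.ofReal |y - c'|) ^ (-α₂) ≤ Afun α₁ α₂ y := by
  unfold Afun
  set t1 := (ENNReal.ofReal |y - 0|) ^ (-α₁) with ht1
  set t2 := (ENNReal.ofReal |y - 1|) ^ (-α₁) with ht2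
  set t3 := (ENNReal.ofReal |y - 0|) ^ (-α₂) with ht3
  set t4 := (ENNReal.ofReal |y - 1|) ^ (-α₂) with ht4
  have hs1 : t1 ≤ t1 + t2 + t3 + t4 :=
    le_add_right (le_add_right (self_le_add_right _ _))
  have hs2 : t2 ≤ t1 + t2 + t3 + t4 :=
    le_add_right (le_add_right le_add_self)
  have hs3 : t3 ≤ t1 + t2 + t3 + t4 := le_add_right le_add_self
  have hs4 : t4 ≤ t1 + t2 + t3 + t4 := le_add_self
  have h1half : y ≤ 1/2 → (1:ℝ)/2 ≤ |y - 1| := by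
    intro h; rw [abs_sub_comm, abs_of_nonneg (by linarith [hy.2])]; linarith
  have h0half : 1/2 ≤ y → (1:ℝ)/2 ≤ |y - 0| := by
    intro h; rw [sub_zero, abs_of_nonneg hy.1]; linarith
  rcases hcc with ⟨rfl, rfl⟩ | ⟨rfl, rfl⟩
  · -- (|y-0|)^{-α₁} * (|y-1|)^{-α₂} = t1 * t4
    rcases le_total y (1/2) with h | h
    · -- t4-side ≤ 2
      calc t1 * t4 ≤ t1 * 2 := mul_le_mul_right (small2 h20 h21.le (h1half h)) _
        _ = 2 * t1 := mul_comm _ _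
        _ ≤ 2 * (t1 + t2 + t3 + t4) := mul_le_mul_right hs1 2
    · calc t1 * t4 ≤ 2 * t4 := mul_le_mul_left (small2 h10 h11.le (h0half h)) _
        _ ≤ 2 * (t1 + t2 + t3 + t4) := mul_le_mul_right hs4 2
  · -- t2 * t3
    rcases le_total y (1/2) with h | h
    · calc t2 * t3 ≤ 2 * t3 := mul_le_mul_left (small2 h10 h11.le (h1half h)) _
        _ ≤ 2 * (t1 + t2 + t3 + t4) := mul_le_mul_right hs3 2
    · calc t2 * t3 ≤ t2 * 2 := mul_le_mul_right (small2 h20 h21.le (h0half h)) _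
        _ = 2 * t2 := mul_comm _ _
        _ ≤ 2 * (t1 + t2 + t3 + t4) := mul_le_mul_right hs2 2

theorem stmt_10 (α₁ α₂ α₃ α₄ ε : ℝ) (h₁ : α₁ ∈ Set.Ioo (0:ℝ) 1) (h₂ : α₂ ∈ Set.Ioo (0:ℝ) 1)
    (h₃ : α₃ ∈ Set.Ioo (0:ℝ) 1) (h₄ : α₄ ∈ Set.Ioo (0:ℝ) 1)
    (hε : ε = -1 ∨ ε = 1) :
    (∫⁻ p in Set.Icc (0:ℝ) 1 ×ˢ (Set.Icc (0:ℝ) 1 ×ˢ (Set.Icc (0:ℝ) 1 ×ˢ Set.Icc (0:ℝ) 1)),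
        ENNReal.ofReal (|p.1 - p.2.1 + ε| ^ (-α₁) * |p.2.1 - p.2.2.1 + ε| ^ (-α₂) *
          |p.2.2.1 - p.2.2.2| ^ (-α₃) * |p.2.2.2 - p.1| ^ (-α₄))) < ⊤ := by
  obtain ⟨h10, h11⟩ := h₁
  obtain ⟨h20, h21⟩ := h₂
  obtain ⟨h30, h31⟩ := h₃
  obtain ⟨h40, h41⟩ := h₄
  set I : Set ℝ := Set.Icc (0:ℝ) 1 with hIdef
  set C₃ := ENNReal.ofReal (2/(1-α₃)) with hC3
  set C₄ := ENNReal.ofReal (2/(1-α₄)) with hC4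
  set CA := 2 * (ENNReal.ofReal (2/(1-α₁)) + ENNReal.ofReal (2/(1-α₁))
      + ENNReal.ofReal (2/(1-α₂)) + ENNReal.ofReal (2/(1-α₂))) with hCA
  -- iterated integral expansion
  have e2 : ∀ (g : ℝ × ℝ → ENNReal), Measurable g →
      ∫⁻ p in I ×ˢ I, g p = ∫⁻ z in I, ∫⁻ w in I, g (z, w) := by
    intro g hg
    rw [Measure.volume_eq_prod, ← Measure.prod_restrict]
    exact lintegral_prod _ hg.aemeasurable
  have e3 : ∀ (g : ℝ × (ℝ × ℝ) → ENNReal), Measurable g →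
      ∫⁻ p in I ×ˢ (I ×ˢ I), g p = ∫⁻ y in I, ∫⁻ z in I, ∫⁻ w in I, g (y, (z, w)) := by
    intro g hg
    rw [Measure.volume_eq_prod, ← Measure.prod_restrict, lintegral_prod _ hg.aemeasurable]
    exact lintegral_congr fun y => e2 _ (hg.comp measurable_prodMk_left)
  have e4 : ∀ (g : ℝ × (ℝ × (ℝ × ℝ)) → ENNReal), Measurable g →
      ∫⁻ p in I ×ˢ (I ×ˢ (I ×ˢ I)), g p
        = ∫⁻ x in I, ∫⁻ y in I, ∫⁻ z in I, ∫⁻ w in I, g (x, (y, (z, w))) := by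
    intro g hg
    rw [Measure.volume_eq_prod, ← Measure.prod_restrict, lintegral_prod _ hg.aemeasurable]
    exact lintegral_congr fun x => e3 _ (hg.comp measurable_prodMk_left)
  have hIvol : volume I = 1 := by
    rw [hIdef, Real.volume_Icc]; norm_num
  -- the dominating function, in two pieces
  set G1 : ℝ × (ℝ × (ℝ × ℝ)) → ENNReal := fun p =>
    Afun α₁ α₂ p.2.1 * (2 * ((ENNReal.ofReal |p.2.2.1 - p.1|) ^ (-α₃)
      * (ENNReal.ofReal |p.2.2.2 - p.1|) ^ (-α₄))) with hG1def
  set G2 : ℝ × (ℝ × (ℝ × ℝ)) → ENNReal := fun p =>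
    Afun α₁ α₂ p.2.1 * (2 * ((ENNReal.ofReal |p.2.2.1 - p.1|) ^ (-α₄)
      * (ENNReal.ofReal |p.2.2.2 - p.2.2.1|) ^ (-α₃))) with hG2def
  have hG1m : Measurable G1 := by rw [hG1def]; fun_prop
  have hG2m : Measurable G2 := by rw [hG2def]; fun_prop
  -- pointwise bound
  have hpt : ∀ p ∈ I ×ˢ (I ×ˢ (I ×ˢ I)),
      ENNReal.ofReal (|p.1 - p.2.1 + ε| ^ (-α₁) * |p.2.1 - p.2.2.1 + ε| ^ (-α₂) *
        |p.2.2.1 - p.2.2.2| ^ (-α₃) * |p.2.2.2 - p.1| ^ (-α₄)) ≤ G1 p + G2 p := by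
    rintro ⟨x, y, z, w⟩ hp
    simp only [Set.mem_prod] at hp
    obtain ⟨hx, hy, hz, hw⟩ := hp
    simp only [hIdef, Set.mem_Icc] at hx hy hz hw
    simp only [hG1def, hG2def]
    rw [ENNReal.ofReal_mul (by positivity), ENNReal.ofReal_mul (by positivity),
      ENNReal.ofReal_mul (by positivity)]
    have b1 := small1 h10 (x - y + ε)
    have b2 := small1 h20 (y - z + ε)
    have b3 := small1 h30 (z - w)
    have b4 := small1 h40 (w - x)
    have hQ : (ENNReal.ofReal |x - y + ε|) ^ (-α₁) * (ENNReal.ofReal |y - z + ε|) ^ (-α₂)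
        ≤ Afun α₁ α₂ y := by
      rcases hε with rfl | rfl
      · have q1 : (ENNReal.ofReal |x - y + (-1)|) ^ (-α₁)
            ≤ (ENNReal.ofReal |y - 0|) ^ (-α₁) := by
          refine ennrpow_anti (ENNReal.ofReal_le_ofReal ?_) h10
          rw [sub_zero, abs_of_nonneg hy.1,
            abs_of_nonpos (by linarith [hx.1, hy.2] : x - y + (-1) ≤ 0)]
          linarith [hx.2]
        have q2 : (ENNReal.ofReal |y - z + (-1)|) ^ (-α₂)
            ≤ (ENNReal.ofReal |y - 1|) ^ (-α₂) := by
          refine ennrpow_anti (ENNReal.ofReal_le_ofReal ?_) h20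
          rw [abs_of_nonpos (by linarith [hy.2] : y - (1:ℝ) ≤ 0),
            abs_of_nonpos (by linarith [hy.2, hz.1] : y - z + (-1) ≤ 0)]
          linarith [hz.1]
        exact (mul_le_mul' q1 q2).trans
          (Afun_ptbound h10 h11 h20 h21 hy (Or.inl ⟨rfl, rfl⟩))
      · have q1 : (ENNReal.ofReal |x - y + 1|) ^ (-α₁)
            ≤ (ENNReal.ofReal |y - 1|) ^ (-α₁) := by
          refine ennrpow_anti (ENNReal.ofReal_le_ofReal ?_) h10
          rw [abs_of_nonpos (by linarith [hy.2] : y - (1:ℝ) ≤ 0),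
            abs_of_nonneg (by linarith [hx.1, hy.2] : (0:ℝ) ≤ x - y + 1)]
          linarith [hx.1]
        have q2 : (ENNReal.ofReal |y - z + 1|) ^ (-α₂)
            ≤ (ENNReal.ofReal |y - 0|) ^ (-α₂) := by
          refine ennrpow_anti (ENNReal.ofReal_le_ofReal ?_) h20
          rw [sub_zero, abs_of_nonneg hy.1,
            abs_of_nonneg (by linarith [hy.1, hz.2] : (0:ℝ) ≤ y - z + 1)]
          linarith [hz.2]
        exact (mul_le_mul' q1 q2).trans
          (Afun_ptbound h10 h11 h20 h21 hy (Or.inr ⟨rfl, rfl⟩))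
    have hT : (ENNReal.ofReal |z - w|) ^ (-α₃) * (ENNReal.ofReal |w - x|) ^ (-α₄)
        ≤ 2 * ((ENNReal.ofReal |z - x|) ^ (-α₃) * (ENNReal.ofReal |w - x|) ^ (-α₄))
          + 2 * ((ENNReal.ofReal |z - x|) ^ (-α₄) * (ENNReal.ofReal |w - z|) ^ (-α₃)) := by
      have tri : |z - x| ≤ |z - w| + |w - x| := abs_sub_le z w x
      rcases le_total |z - w| |w - x| with hcmp | hcmp
      · have h2 : |z - x| / 2 ≤ |w - x| := by linarith
        have hb : (ENNReal.ofReal |w - x|) ^ (-α₄)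
            ≤ 2 * (ENNReal.ofReal |z - x|) ^ (-α₄) :=
          (ennrpow_anti (ENNReal.ofReal_le_ofReal h2) h40).trans (half h40 h41.le _)
        calc (ENNReal.ofReal |z - w|) ^ (-α₃) * (ENNReal.ofReal |w - x|) ^ (-α₄)
            ≤ (ENNReal.ofReal |z - w|) ^ (-α₃) * (2 * (ENNReal.ofReal |z - x|) ^ (-α₄)) :=
              mul_le_mul_right hb _
          _ = 2 * ((ENNReal.ofReal |z - x|) ^ (-α₄) * (ENNReal.ofReal |w - z|) ^ (-α₃)) := by
              rw [abs_sub_comm z w]; ring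
          _ ≤ _ := le_add_self
      · have h2 : |z - x| / 2 ≤ |z - w| := by linarith
        have hb : (ENNReal.ofReal |z - w|) ^ (-α₃)
            ≤ 2 * (ENNReal.ofReal |z - x|) ^ (-α₃) :=
          (ennrpow_anti (ENNReal.ofReal_le_ofReal h2) h30).trans (half h30 h31.le _)
        calc (ENNReal.ofReal |z - w|) ^ (-α₃) * (ENNReal.ofReal |w - x|) ^ (-α₄)
            ≤ (2 * (ENNReal.ofReal |z - x|) ^ (-α₃)) * (ENNReal.ofReal |w - x|) ^ (-α₄) :=
              mul_le_mul_left hb _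
          _ = 2 * ((ENNReal.ofReal |z - x|) ^ (-α₃) * (ENNReal.ofReal |w - x|) ^ (-α₄)) := by
              ring
          _ ≤ _ := self_le_add_right _ _
    calc ENNReal.ofReal (|x - y + ε| ^ (-α₁)) * ENNReal.ofReal (|y - z + ε| ^ (-α₂))
          * ENNReal.ofReal (|z - w| ^ (-α₃)) * ENNReal.ofReal (|w - x| ^ (-α₄))
        ≤ (ENNReal.ofReal |x - y + ε|) ^ (-α₁) * (ENNReal.ofReal |y - z + ε|) ^ (-α₂)
          * (ENNReal.ofReal |z - w|) ^ (-α₃) * (ENNReal.ofReal |w - x|) ^ (-α₄) :=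
          mul_le_mul' (mul_le_mul' (mul_le_mul' b1 b2) b3) b4
      _ = ((ENNReal.ofReal |x - y + ε|) ^ (-α₁) * (ENNReal.ofReal |y - z + ε|) ^ (-α₂))
          * ((ENNReal.ofReal |z - w|) ^ (-α₃) * (ENNReal.ofReal |w - x|) ^ (-α₄)) := by ring
      _ ≤ Afun α₁ α₂ y *
          (2 * ((ENNReal.ofReal |z - x|) ^ (-α₃) * (ENNReal.ofReal |w - x|) ^ (-α₄))
          + 2 * ((ENNReal.ofReal |z - x|) ^ (-α₄) * (ENNReal.ofReal |w - z|) ^ (-α₃))) :=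
          mul_le_mul' hQ hT
      _ = _ := by rw [mul_add]
  -- integral bounds for the two pieces
  have hG1 : ∫⁻ p in I ×ˢ (I ×ˢ (I ×ˢ I)), G1 p ≤ CA * (2 * (C₃ * C₄)) := by
    rw [e4 _ hG1m]
    simp only [hG1def]
    calc ∫⁻ x in I, ∫⁻ y in I, ∫⁻ z in I, ∫⁻ w in I,
          Afun α₁ α₂ y * (2 * ((ENNReal.ofReal |z - x|) ^ (-α₃)
            * (ENNReal.ofReal |w - x|) ^ (-α₄)))
        ≤ ∫⁻ x in I, ∫⁻ y in I, ∫⁻ z in I,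
            Afun α₁ α₂ y * (2 * ((ENNReal.ofReal |z - x|) ^ (-α₃) * C₄)) := by
          refine lintegral_mono fun x => lintegral_mono fun y => lintegral_mono fun z => ?_
          calc ∫⁻ w in I, Afun α₁ α₂ y * (2 * ((ENNReal.ofReal |z - x|) ^ (-α₃)
                * (ENNReal.ofReal |w - x|) ^ (-α₄)))
              = ∫⁻ w in I, (Afun α₁ α₂ y * (2 * (ENNReal.ofReal |z - x|) ^ (-α₃)))
                * (ENNReal.ofReal |w - x|) ^ (-α₄) := lintegral_congr fun w => by ring
            _ = (Afun α₁ α₂ y * (2 * (ENNReal.ofReal |z - x|) ^ (-α₃)))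
                * ∫⁻ w in I, (ENNReal.ofReal |w - x|) ^ (-α₄) :=
                lintegral_const_mul _ (meas_aux x α₄)
            _ ≤ (Afun α₁ α₂ y * (2 * (ENNReal.ofReal |z - x|) ^ (-α₃))) * C₄ :=
                mul_le_mul_right (key1 h40 h41 x) _
            _ = Afun α₁ α₂ y * (2 * ((ENNReal.ofReal |z - x|) ^ (-α₃) * C₄)) := by ring
      _ ≤ ∫⁻ x in I, ∫⁻ y in I, Afun α₁ α₂ y * (2 * (C₃ * C₄)) := by
          refine lintegral_mono fun x => lintegral_mono fun y => ?_
          calc ∫⁻ z in I, Afun α₁ α₂ y * (2 * ((ENNReal.ofReal |z - x|) ^ (-α₃) * C₄))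
              = ∫⁻ z in I, (Afun α₁ α₂ y * (2 * C₄)) * (ENNReal.ofReal |z - x|) ^ (-α₃) :=
                lintegral_congr fun z => by ring
            _ = (Afun α₁ α₂ y * (2 * C₄)) * ∫⁻ z in I, (ENNReal.ofReal |z - x|) ^ (-α₃) :=
                lintegral_const_mul _ (meas_aux x α₃)
            _ ≤ (Afun α₁ α₂ y * (2 * C₄)) * C₃ := mul_le_mul_right (key1 h30 h31 x) _
            _ = Afun α₁ α₂ y * (2 * (C₃ * C₄)) := by ring
      _ ≤ ∫⁻ x in I, CA * (2 * (C₃ * C₄)) := by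
          refine lintegral_mono fun x => ?_
          calc ∫⁻ y in I, Afun α₁ α₂ y * (2 * (C₃ * C₄))
              = (∫⁻ y in I, Afun α₁ α₂ y) * (2 * (C₃ * C₄)) :=
                lintegral_mul_const _ (Afun_meas α₁ α₂)
            _ ≤ CA * (2 * (C₃ * C₄)) :=
                mul_le_mul_left (Afun_int h10 h11 h20 h21) _
      _ = CA * (2 * (C₃ * C₄)) := by rw [setLIntegral_const, hIvol, mul_one]
  have hG2 : ∫⁻ p in I ×ˢ (I ×ˢ (I ×ˢ I)), G2 p ≤ CA * (2 * (C₄ * C₃)) := by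
    rw [e4 _ hG2m]
    simp only [hG2def]
    calc ∫⁻ x in I, ∫⁻ y in I, ∫⁻ z in I, ∫⁻ w in I,
          Afun α₁ α₂ y * (2 * ((ENNReal.ofReal |z - x|) ^ (-α₄)
            * (ENNReal.ofReal |w - z|) ^ (-α₃)))
        ≤ ∫⁻ x in I, ∫⁻ y in I, ∫⁻ z in I,
            Afun α₁ α₂ y * (2 * ((ENNReal.ofReal |z - x|) ^ (-α₄) * C₃)) := by
          refine lintegral_mono fun x => lintegral_mono fun y => lintegral_mono fun z => ?_
          calc ∫⁻ w in I, Afun α₁ α₂ y * (2 * ((ENNReal.ofReal |z - x|) ^ (-α₄)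
                * (ENNReal.ofReal |w - z|) ^ (-α₃)))
              = ∫⁻ w in I, (Afun α₁ α₂ y * (2 * (ENNReal.ofReal |z - x|) ^ (-α₄)))
                * (ENNReal.ofReal |w - z|) ^ (-α₃) := lintegral_congr fun w => by ring
            _ = (Afun α₁ α₂ y * (2 * (ENNReal.ofReal |z - x|) ^ (-α₄)))
                * ∫⁻ w in I, (ENNReal.ofReal |w - z|) ^ (-α₃) :=
                lintegral_const_mul _ (meas_aux z α₃)
            _ ≤ (Afun α₁ α₂ y * (2 * (ENNReal.ofReal |z - x|) ^ (-α₄))) * C₃ :=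
                mul_le_mul_right (key1 h30 h31 z) _
            _ = Afun α₁ α₂ y * (2 * ((ENNReal.ofReal |z - x|) ^ (-α₄) * C₃)) := by ring
      _ ≤ ∫⁻ x in I, ∫⁻ y in I, Afun α₁ α₂ y * (2 * (C₄ * C₃)) := by
          refine lintegral_mono fun x => lintegral_mono fun y => ?_
          calc ∫⁻ z in I, Afun α₁ α₂ y * (2 * ((ENNReal.ofReal |z - x|) ^ (-α₄) * C₃))
              = ∫⁻ z in I, (Afun α₁ α₂ y * (2 * C₃)) * (ENNReal.ofReal |z - x|) ^ (-α₄) :=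
                lintegral_congr fun z => by ring
            _ = (Afun α₁ α₂ y * (2 * C₃)) * ∫⁻ z in I, (ENNReal.ofReal |z - x|) ^ (-α₄) :=
                lintegral_const_mul _ (meas_aux x α₄)
            _ ≤ (Afun α₁ α₂ y * (2 * C₃)) * C₄ := mul_le_mul_right (key1 h40 h41 x) _
            _ = Afun α₁ α₂ y * (2 * (C₄ * C₃)) := by ring
      _ ≤ ∫⁻ x in I, CA * (2 * (C₄ * C₃)) := by
          refine lintegral_mono fun x => ?_
          calc ∫⁻ y in I, Afun α₁ α₂ y * (2 * (C₄ * C₃))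
              = (∫⁻ y in I, Afun α₁ α₂ y) * (2 * (C₄ * C₃)) :=
                lintegral_mul_const _ (Afun_meas α₁ α₂)
            _ ≤ CA * (2 * (C₄ * C₃)) :=
                mul_le_mul_left (Afun_int h10 h11 h20 h21) _
      _ = CA * (2 * (C₄ * C₃)) := by rw [setLIntegral_const, hIvol, mul_one]
  have hfin : CA * (2 * (C₃ * C₄)) + CA * (2 * (C₄ * C₃)) < ⊤ := by
    have hCAfin : CA ≠ ⊤ := by
      rw [hCA]
      exact ENNReal.mul_ne_top (by norm_num)
        (by exact ENNReal.add_ne_top.2 ⟨ENNReal.add_ne_top.2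
          ⟨ENNReal.add_ne_top.2 ⟨ENNReal.ofReal_ne_top, ENNReal.ofReal_ne_top⟩,
            ENNReal.ofReal_ne_top⟩, ENNReal.ofReal_ne_top⟩)
    have h3 : C₃ ≠ ⊤ := ENNReal.ofReal_ne_top
    have h4 : C₄ ≠ ⊤ := ENNReal.ofReal_ne_top
    refine ENNReal.add_lt_top.2 ⟨?_, ?_⟩ <;>
      · refine ENNReal.mul_lt_top ?_ ?_ <;>
          first
          | exact hCAfin.lt_top
          | exact (ENNReal.mul_ne_top (by norm_num) (ENNReal.mul_ne_top h3 h4)).lt_top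
          | exact (ENNReal.mul_ne_top (by norm_num) (ENNReal.mul_ne_top h4 h3)).lt_top
  calc (∫⁻ p in I ×ˢ (I ×ˢ (I ×ˢ I)),
        ENNReal.ofReal (|p.1 - p.2.1 + ε| ^ (-α₁) * |p.2.1 - p.2.2.1 + ε| ^ (-α₂) *
          |p.2.2.1 - p.2.2.2| ^ (-α₃) * |p.2.2.2 - p.1| ^ (-α₄)))
      ≤ ∫⁻ p in I ×ˢ (I ×ˢ (I ×ˢ I)), (G1 p + G2 p) :=
        setLIntegral_mono (hG1m.add hG2m) hpt
    _ = (∫⁻ p in I ×ˢ (I ×ˢ (I ×ˢ I)), G1 p) + ∫⁻ p in I ×ˢ (I ×ˢ (I ×ˢ I)), G2 p :=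
        lintegral_add_left hG1m _
    _ ≤ CA * (2 * (C₃ * C₄)) + CA * (2 * (C₄ * C₃)) := add_le_add hG1 hG2
    _ < ⊤ := hfin
end
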